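/- arXiv:2202.01111 — 12 statements merged into one kernel-verified Lean document; each statement's English description precedes it below -/
import Mathlib

section
/- For every positive integer r, there exists a unique formal power series T in ℚ[[X]] satisfying the functional equation T = 1 + X * T^(r+1). -/
open PowerSeries

private noncomputable def Ffc (r : ℕ) (A : PowerSeries ℚ) : PowerSeries ℚ :=
  1 + PowerSeries.X * A ^ (r + 1)

private lemma fc_zero (A : PowerSeries ℚ) (h : ∀ n, (PowerSeries.X : PowerSeries ℚ) ^ n ∣ A) :
    A = 0 := by
  ext n
  have := (PowerSeries.X_pow_dvd_iff.mp (h (n + 1))) n (Nat.lt_succ_self n)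
  simpa using this

private lemma fc_contract (r n : ℕ) (A B : PowerSeries ℚ)
    (h : (PowerSeries.X : PowerSeries ℚ) ^ n ∣ A - B) :
    (PowerSeries.X : PowerSeries ℚ) ^ (n + 1) ∣ Ffc r A - Ffc r B := by
  have h1 : (PowerSeries.X : PowerSeries ℚ) ^ n ∣ A ^ (r + 1) - B ^ (r + 1) :=
    h.trans (sub_dvd_pow_sub_pow A B (r + 1))
  have : Ffc r A - Ffc r B = PowerSeries.X * (A ^ (r + 1) - B ^ (r + 1)) := by
    simp [Ffc]; ring
  rw [this, pow_succ, mul_comm ((PowerSeries.X : PowerSeries ℚ) ^ n) _]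
  exact mul_dvd_mul_left _ h1

private lemma fc_iter_dvd (r n : ℕ) (A B : PowerSeries ℚ) :
    (PowerSeries.X : PowerSeries ℚ) ^ n ∣ (Ffc r)^[n] A - (Ffc r)^[n] B := by
  induction n with
  | zero => simpa using dvd_refl _
  | succ n ih =>
    rw [Function.iterate_succ_apply', Function.iterate_succ_apply']
    exact fc_contract r n _ _ ih

private lemma fc_telescope (r n : ℕ) :
    (PowerSeries.X : PowerSeries ℚ) ^ n ∣ (Ffc r)^[n + 1] 1 - (Ffc r)^[n] 1 := by
  have := fc_iter_dvd r n (Ffc r 1) 1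
  rwa [← Function.iterate_succ_apply] at this

private noncomputable def Tfc (r : ℕ) : PowerSeries ℚ :=
  PowerSeries.mk fun n => PowerSeries.coeff n ((Ffc r)^[n + 1] 1)

private lemma fc_stable (r k : ℕ) : ∀ m, k < m →
    PowerSeries.coeff k ((Ffc r)^[m] 1) = PowerSeries.coeff k ((Ffc r)^[k + 1] 1) := by
  intro m hm
  induction m with
  | zero => omega
  | succ m ih =>
    rcases Nat.lt_or_ge k m with h | h
    · have hkm := ih h
      have hd := fc_telescope r m
      have := (PowerSeries.X_pow_dvd_iff.mp hd) k h
      rw [map_sub, sub_eq_zero] at this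
      rw [this, hkm]
    · have : m = k := by omega
      subst this; rfl

private lemma fc_approx (r n : ℕ) :
    (PowerSeries.X : PowerSeries ℚ) ^ n ∣ Tfc r - (Ffc r)^[n] 1 := by
  rw [PowerSeries.X_pow_dvd_iff]
  intro k hk
  rw [map_sub, sub_eq_zero]
  simp only [Tfc, PowerSeries.coeff_mk]
  exact (fc_stable r k n hk).symm

private lemma fc_fixed (r : ℕ) : Tfc r = Ffc r (Tfc r) := by
  have key : ∀ n, (PowerSeries.X : PowerSeries ℚ) ^ n ∣ Tfc r - Ffc r (Tfc r) := by
    intro n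
    have h1 : (PowerSeries.X : PowerSeries ℚ) ^ (n + 1) ∣ Tfc r - (Ffc r)^[n + 1] 1 :=
      fc_approx r (n + 1)
    have h2 : (PowerSeries.X : PowerSeries ℚ) ^ (n + 1) ∣ (Ffc r)^[n + 1] 1 - Ffc r (Tfc r) := by
      rw [Function.iterate_succ_apply']
      exact fc_contract r n _ _ (dvd_sub_comm.mp (fc_approx r n))
    have h3 : (PowerSeries.X : PowerSeries ℚ) ^ (n + 1) ∣ Tfc r - Ffc r (Tfc r) := by
      have := dvd_add h1 h2
      simpa using this
    exact (pow_dvd_pow _ (Nat.le_succ n)).trans h3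
  exact sub_eq_zero.mp (fc_zero _ key)

theorem fussCatalan_gf_exists_unique (r : ℕ) (hr : 0 < r) :
    ∃! T : PowerSeries ℚ, T = 1 + PowerSeries.X * T ^ (r + 1) := by
  refine ⟨Tfc r, ?_, ?_⟩
  · have := fc_fixed r; simpa only [Ffc] using this
  intro S hS
  have hT : Tfc r = 1 + PowerSeries.X * Tfc r ^ (r + 1) := by
    simpa only [Ffc] using fc_fixed r
  have key : ∀ n, (PowerSeries.X : PowerSeries ℚ) ^ n ∣ S - Tfc r := by
    intro n
    induction n with
    | zero => simpa using dvd_refl _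
    | succ n ih =>
      have := fc_contract r n S (Tfc r) ih
      simp only [Ffc] at this
      rwa [← hS, ← hT] at this
  exact sub_eq_zero.mp (fc_zero _ key)
end

section
/- Let r be a positive integer and suppose T ∈ ℚ[[X]] satisfies T = 1 + X * T^(r+1). Then for every natural number n, the coefficient of X^n in T equals (1/(r*n+1)) * choose((r+1)*n, n). -/
open PowerSeries

private lemma vandermonde_range (t m n : ℕ) :
    ∑ i ∈ Finset.range (n+1), t.choose i * m.choose (n-i) = (t+m).choose n := by
  rw [Nat.add_choose_eq, Finset.Nat.sum_antidiagonal_eq_sum_range_succ_mk]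

private lemma auxA (t m k : ℕ) :
    ∑ j ∈ Finset.range (k+2), j * (t+1).choose j * m.choose (k+1-j)
      = (t+1) * (t+m).choose k := by
  rw [Finset.sum_range_succ']
  simp only [Nat.zero_eq, Nat.choose_zero_right, Nat.mul_zero, Nat.zero_mul, add_zero]
  rw [← vandermonde_range t m k, Finset.mul_sum]
  refine Finset.sum_congr rfl fun i hi => ?_
  have h1 : (i+1) * (t+1).choose (i+1) = (t+1) * t.choose i := by
    rw [mul_comm (i+1), Nat.add_one_mul_choose_eq t i, mul_comm]
  have h2 : k + 1 - (i+1) = k - i := by omega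
  calc (i+1) * (t+1).choose (i+1) * m.choose (k+1-(i+1))
      = (t+1) * t.choose i * m.choose (k-i) := by rw [h1, h2]
    _ = (t+1) * (t.choose i * m.choose (k-i)) := by ring

private lemma key (r : ℕ) (T : PowerSeries ℚ)
    (hT : T = 1 + PowerSeries.X * T ^ (r + 1)) :
    ∀ n s : ℕ, PowerSeries.coeff n (T ^ s) =
      if n = 0 then 1
      else (s : ℚ) / ((r+1)*n + s) * (Nat.choose ((r+1)*n + s) n : ℚ) := by
  have hc0 : PowerSeries.constantCoeff T = 1 := by
    conv_lhs => rw [hT]; simp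
  intro n
  induction n using Nat.strong_induction_on with
  | _ n IH =>
  intro s
  rcases Nat.eq_zero_or_pos n with hn | hn
  · subst hn
    simp [PowerSeries.coeff_zero_eq_constantCoeff, map_pow, hc0]
  rw [if_neg hn.ne']
  rcases Nat.eq_zero_or_pos s with hs | hs
  · subst hs
    simp [PowerSeries.coeff_one, hn.ne']
  have hnQ : (0:ℚ) < (n:ℚ) := by exact_mod_cast hn
  have hrn : ((r:ℚ)+1) * n ≠ 0 := by positivity
  -- expansion of T^s
  have hexp : T ^ s = ∑ j ∈ Finset.range (s+1),
      PowerSeries.C (Nat.choose s j : ℚ) *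
        (PowerSeries.X ^ j * T ^ ((r+1)*j)) := by
    conv_lhs => rw [hT]
    rw [add_comm (1 : PowerSeries ℚ), add_pow]
    refine Finset.sum_congr rfl fun j _ => ?_
    rw [mul_pow, one_pow, mul_one, ← pow_mul, ← map_natCast PowerSeries.C (Nat.choose s j)]
    ring
  have hco : (PowerSeries.coeff n) (T ^ s)
      = ∑ j ∈ Finset.range (s+1), (Nat.choose s j : ℚ) *
          (if j ≤ n then PowerSeries.coeff (n - j) (T ^ ((r+1)*j)) else 0) := by
    rw [hexp, map_sum]
    refine Finset.sum_congr rfl fun j _ => ?_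
    rw [PowerSeries.coeff_C_mul, PowerSeries.coeff_X_pow_mul']
  set G : ℕ → ℚ := fun j => if 1 ≤ j ∧ j ≤ n
      then ((r:ℚ)+1)/(((r:ℚ)+1)*n)
            * ((j * Nat.choose s j * Nat.choose ((r+1)*n) (n-j) : ℕ) : ℚ)
      else 0 with hG
  have hFeq : ∀ j ∈ Finset.range (s+1),
      (Nat.choose s j : ℚ) *
        (if j ≤ n then PowerSeries.coeff (n - j) (T ^ ((r+1)*j)) else 0) = G j := by
    intro j _
    rcases Nat.eq_zero_or_pos j with rfl | hj
    · simp [hG, PowerSeries.coeff_one, hn.ne']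
    by_cases hjn : j ≤ n
    · rw [if_pos hjn, hG]
      simp only
      rw [if_pos ⟨hj, hjn⟩]
      have hlt : n - j < n := by omega
      rw [IH (n-j) hlt ((r+1)*j)]
      have hargs : (r+1)*(n-j) + (r+1)*j = (r+1)*n := by
        rw [← Nat.mul_add, Nat.sub_add_cancel hjn]
      by_cases h0 : n - j = 0
      · have hjn' : j = n := by omega
        rw [if_pos h0]
        subst hjn'
        rw [h0]
        simp only [Nat.choose_zero_right, Nat.cast_one]
        push_cast
        field_simp
      · rw [if_neg h0, hargs]
        have hden : ((r:ℚ)+1)*((n - j : ℕ):ℚ) + (((r+1)*j : ℕ):ℚ) = ((r:ℚ)+1)*n := by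
          push_cast [Nat.cast_sub hjn]
          ring
        rw [hden]
        push_cast
        field_simp
    · rw [if_neg hjn, hG]
      simp only
      rw [if_neg (by omega)]
      ring
  rw [hco, Finset.sum_congr rfl hFeq]
  have hshift : ∑ j ∈ Finset.range (s+1), G j = ∑ j ∈ Finset.range (n+1), G j := by
    rw [Finset.sum_subset (Finset.range_subset_range.2 (show s+1 ≤ s+n+2 by omega)),
        Finset.sum_subset (Finset.range_subset_range.2 (show n+1 ≤ s+n+2 by omega))]
    · intro x hx hx'
      have hxn : n < x := by
        simp only [Finset.mem_range] at hx'
        omega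
      rw [hG]
      simp only
      rw [if_neg (by omega)]
    · intro x hx hx'
      have hxs : s < x := by
        simp only [Finset.mem_range] at hx'
        omega
      rw [hG]
      simp only [Nat.choose_eq_zero_of_lt hxs]
      simp
  rw [hshift]
  have hnat : ∑ j ∈ Finset.range (n+1), G j
      = ((r:ℚ)+1)/(((r:ℚ)+1)*n)
          * ((∑ j ∈ Finset.range (n+1), j * Nat.choose s j * Nat.choose ((r+1)*n) (n-j) : ℕ) : ℚ) := by
    rw [Nat.cast_sum, Finset.mul_sum]
    refine Finset.sum_congr rfl fun j hj => ?_
    have hjn : j ≤ n := by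
      simp only [Finset.mem_range] at hj
      omega
    rcases Nat.eq_zero_or_pos j with rfl | hj1
    · simp [hG]
    · rw [hG]
      simp only
      rw [if_pos ⟨hj1, hjn⟩]
  rw [hnat]
  obtain ⟨k, rfl⟩ : ∃ k, n = k+1 := ⟨n-1, by omega⟩
  obtain ⟨t, rfl⟩ : ∃ t, s = t+1 := ⟨s-1, by omega⟩
  rw [auxA t ((r+1)*(k+1)) k]
  have hNat : ((r+1)*(k+1) + t + 1) * (t + (r+1)*(k+1)).choose k
      = ((r+1)*(k+1) + (t+1)).choose (k+1) * (k+1) := by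
    have h := Nat.add_one_mul_choose_eq ((r+1)*(k+1) + t) k
    have e1 : (r+1)*(k+1) + t + 1 = Nat.succ ((r+1)*(k+1) + t) := rfl
    have e2 : t + (r+1)*(k+1) = (r+1)*(k+1) + t := by omega
    have e3 : (r+1)*(k+1) + (t+1) = Nat.succ ((r+1)*(k+1) + t) := by omega
    rw [e1, e2, e3, h]
  have hNQ : (((r+1)*(k+1) + t + 1 : ℕ) : ℚ) * ((t + (r+1)*(k+1)).choose k : ℚ)
      = (((r+1)*(k+1) + (t+1)).choose (k+1) : ℚ) * ((k+1 : ℕ) : ℚ) := by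
    exact_mod_cast congrArg (Nat.cast : ℕ → ℚ) hNat
  have hden2 : ((r:ℚ)+1)*((k:ℚ)+1) + ((t:ℚ)+1) ≠ 0 := by positivity
  push_cast at hNQ ⊢
  field_simp
  rw [show (r+1)*(k+1)+(t+1) = (r+1)*(k+1)+t+1 from rfl] at hNQ
  linear_combination hNQ
theorem fussCatalan_gf_coeff (r : ℕ) (hr : 0 < r) (T : PowerSeries ℚ)
    (hT : T = 1 + PowerSeries.X * T ^ (r + 1)) (n : ℕ) :
    PowerSeries.coeff n T =
      (1 / (r * n + 1 : ℚ)) * (Nat.choose ((r + 1) * n) n : ℚ) := by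
  have h := key r T hT n 1
  rw [pow_one] at h
  rcases Nat.eq_zero_or_pos n with rfl | hn
  · simpa using h
  rw [h, if_neg hn.ne']
  have hid := Nat.choose_mul_succ_eq ((r+1)*n) n
  have hsub : (r+1)*n + 1 - n = r*n + 1 := by
    have : (r+1)*n = r*n + n := by ring
    omega
  rw [hsub] at hid
  have hQ : (((r+1)*n).choose n : ℚ) * (((r+1)*n : ℕ) + 1 : ℚ)
      = ((((r+1)*n + 1).choose n : ℕ) : ℚ) * ((r*n + 1 : ℕ) : ℚ) := by
    exact_mod_cast congrArg (Nat.cast : ℕ → ℚ) hid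
  have h1 : ((r:ℚ)+1)*n + 1 ≠ 0 := by positivity
  have h2 : (r:ℚ)*n + 1 ≠ 0 := by positivity
  push_cast at hQ ⊢
  field_simp
  linear_combination -hQ
end

section
/- For every positive integer r, the formal power series T = Σ_{n≥0} ((1/(r*n+1)) * choose((r+1)*n, n)) * X^n over ℚ satisfies T = 1 + X * T^(r+1). -/
open Finset PowerSeries

namespace FCAux

/-- shifted binomial coefficient, as a rational -/
def c (r x k : ℕ) : ℚ := (Nat.choose (x + k * (r + 1)) k : ℚ)

/-- generalized Fuss–Catalan numbers (coefficients of T^x) -/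
def a (r : ℕ) : ℕ → ℕ → ℚ
  | _, 0 => 1
  | x, k + 1 => c r x (k + 1) - (r + 1) * c r (x + r) k

lemma a_zero (r x : ℕ) : a r x 0 = 1 := rfl

lemma a_succ (r x k : ℕ) : a r x (k + 1) = c r x (k + 1) - (r + 1) * c r (x + r) k := rfl

lemma c_pascal (r x k : ℕ) : c r (x + 1) (k + 1) = c r x (k + 1) + c r (x + r + 1) k := by
  unfold c
  have h1 : x + 1 + (k + 1) * (r + 1) = (x + (k + 1) * (r + 1)) + 1 := by ring
  have h2 : x + r + 1 + k * (r + 1) = x + (k + 1) * (r + 1) := by ring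
  rw [h1, h2, Nat.choose_succ_succ (x + (k + 1) * (r + 1)) k]
  push_cast
  ring

lemma a_pascal (r x k : ℕ) : a r (x + 1) (k + 1) = a r x (k + 1) + a r (x + r + 1) k := by
  cases k with
  | zero =>
      simp only [a_succ, a_zero, c]
      norm_num [Nat.choose_one_right]
  | succ j =>
      simp only [a_succ]
      have e1 : x + 1 + r = (x + r) + 1 := by omega
      rw [e1, c_pascal, c_pascal]
      have e2 : c r (x + r + 1 + r) j = c r (x + r + r + 1) j := by
        rw [show x + r + 1 + r = x + r + r + 1 from by omega]
      rw [e2]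
      ring

lemma a_zero_succ (r k : ℕ) : a r 0 (k + 1) = 0 := by
  rw [a_succ]
  unfold c
  have hn : Nat.succ (r + k * (r + 1)) * Nat.choose (r + k * (r + 1)) k
      = Nat.choose (Nat.succ (r + k * (r + 1))) (Nat.succ k) * Nat.succ k :=
    Nat.add_one_mul_choose_eq _ _
  have e : Nat.succ (r + k * (r + 1)) = 0 + (k + 1) * (r + 1) := by
    rw [Nat.succ_eq_add_one]; ring
  rw [e] at hn
  have hq := congrArg (Nat.cast : ℕ → ℚ) hn
  push_cast at hq
  have hk : ((k : ℚ) + 1) ≠ 0 := by positivity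
  have : ((Nat.choose (0 + (k + 1) * (r + 1)) (k + 1) : ℚ)) = (r + 1) * (Nat.choose (r + k * (r + 1)) k : ℚ) := by
    apply mul_right_cancel₀ hk
    rw [← hq]
    ring
  rw [this]
  ring

lemma conv (r : ℕ) : ∀ n x y, (∑ k ∈ range (n + 1), a r x k * a r y (n - k)) = a r (x + y) n := by
  intro n
  induction n using Nat.strong_induction_on with
  | _ n ih =>
    intro x y
    induction x with
    | zero =>
        rw [Finset.sum_eq_single 0]
        · simp [a_zero]
        · intro k _ hk0
          obtain ⟨j, rfl⟩ := Nat.exists_eq_succ_of_ne_zero hk0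
          rw [a_zero_succ, zero_mul]
        · intro h
          exact absurd (Finset.mem_range.2 (Nat.succ_pos n)) h
    | succ x ihx =>
        cases n with
        | zero => simp [a_zero]
        | succ m =>
            rw [Finset.sum_range_succ']
            have step : ∀ i, a r (x + 1) (i + 1) * a r y (m + 1 - (i + 1))
                = a r x (i + 1) * a r y (m + 1 - (i + 1)) + a r (x + r + 1) i * a r y (m - i) := by
              intro i
              rw [a_pascal, Nat.succ_sub_succ]
              ring
            rw [Finset.sum_congr rfl fun i _ => step i, Finset.sum_add_distrib]
            have h2 : (∑ i ∈ range (m + 1), a r (x + r + 1) i * a r y (m - i)) = a r (x + r + 1 + y) m :=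
              ih m (Nat.lt_succ_self m) (x + r + 1) y
            have hp : a r (x + 1 + y) (m + 1) = a r (x + y) (m + 1) + a r (x + y + r + 1) m := by
              rw [show x + 1 + y = (x + y) + 1 from by omega, a_pascal]
            have he : a r (x + r + 1 + y) m = a r (x + y + r + 1) m := by
              rw [show x + r + 1 + y = x + y + r + 1 from by omega]
            rw [Finset.sum_range_succ'] at ihx
            rw [h2, he, a_zero, hp]
            rw [a_zero] at ihx
            linarith [ihx]

lemma fc_eq (r n : ℕ) :
    (1 / (r * n + 1 : ℚ)) * (Nat.choose ((r + 1) * n) n : ℚ) = a r 1 n := by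
  cases n with
  | zero => simp [a_zero]
  | succ k =>
      rw [a_succ]
      unfold c
      have e1 : 1 + (k + 1) * (r + 1) = ((k + 1) * (r + 1)) + 1 := by omega
      have e2 : 1 + r + k * (r + 1) = (k + 1) * (r + 1) := by ring
      have e3 : (r + 1) * (k + 1) = (k + 1) * (r + 1) := by ring
      rw [e1, e2, e3, Nat.choose_succ_succ ((k + 1) * (r + 1)) k]
      set m := (k + 1) * (r + 1) with hm
      have hrec : Nat.choose m (k + 1) * (k + 1) = Nat.choose m k * (m - k) :=
        Nat.choose_succ_right_eq m k
      have hmk : m - k = r * (k + 1) + 1 := by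
        have : m = r * (k + 1) + 1 + k := by rw [hm]; ring
        omega
      rw [hmk] at hrec
      have hq := congrArg (Nat.cast : ℕ → ℚ) hrec
      push_cast at hq
      have hd : ((r : ℚ) * (k + 1) + 1) ≠ 0 := by positivity
      have hd' : ((r : ℚ) * ((k : ℚ) + 1) + 1) ≠ 0 := by positivity
      push_cast
      field_simp
      linear_combination (-(r : ℚ)) * hq

lemma key (r n : ℕ) : a r 1 (n + 1) = a r (r + 1) n := by
  cases n with
  | zero =>
      rw [a_succ, a_zero]
      unfold c
      norm_num [Nat.choose_one_right]
  | succ k =>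
      rw [a_succ, a_succ]
      unfold c
      set m := k * r + k + 2 * r + 1 with hm
      have e1 : 1 + (k + 1 + 1) * (r + 1) = m + 2 := by rw [hm]; ring
      have e2 : 1 + r + (k + 1) * (r + 1) = m + 1 := by rw [hm]; ring
      have e3 : r + 1 + (k + 1) * (r + 1) = m + 1 := by rw [hm]; ring
      have e4 : r + 1 + r + k * (r + 1) = m := by rw [hm]; ring
      rw [e1, e2, e3, e4]
      rw [Nat.choose_succ_succ (m + 1) (k + 1), Nat.choose_succ_succ m (k + 1),
        Nat.choose_succ_succ m k]
      have hrec : Nat.choose m (k + 2) * (k + 2) = Nat.choose m (k + 1) * (m - (k + 1)) :=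
        Nat.choose_succ_right_eq m (k + 1)
      have hmk : m - (k + 1) = r * (k + 2) := by
        have : m = r * (k + 2) + (k + 1) := by rw [hm]; ring
        omega
      rw [hmk] at hrec
      have hq := congrArg (Nat.cast : ℕ → ℚ) hrec
      push_cast at hq
      have hk2 : ((k : ℚ) + 2) ≠ 0 := by positivity
      have hC2 : (Nat.choose m (k + 2) : ℚ) = r * Nat.choose m (k + 1) := by
        apply mul_right_cancel₀ hk2
        rw [hq]; ring
      push_cast
      rw [hC2]
      ring

lemma coeff_pow (r s n : ℕ) :
    PowerSeries.coeff n ((PowerSeries.mk (a r 1)) ^ (s + 1)) = a r (s + 1) n := by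
  induction s generalizing n with
  | zero => simp [coeff_mk]
  | succ s ih =>
      rw [pow_succ, PowerSeries.coeff_mul,
        Finset.Nat.sum_antidiagonal_eq_sum_range_succ_mk]
      simp only [ih, coeff_mk]
      have h := conv r n (s + 1) 1
      simpa using h

end FCAux

theorem fussCatalan_gf_satisfies (r : ℕ) (hr : 0 < r) :
    (PowerSeries.mk fun n => (1 / (r * n + 1 : ℚ)) * (Nat.choose ((r + 1) * n) n : ℚ)) =
      1 + PowerSeries.X *
        (PowerSeries.mk fun n =>
          (1 / (r * n + 1 : ℚ)) * (Nat.choose ((r + 1) * n) n : ℚ)) ^ (r + 1) := by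
  have hT : (PowerSeries.mk fun n => (1 / (r * n + 1 : ℚ)) * (Nat.choose ((r + 1) * n) n : ℚ))
      = PowerSeries.mk (FCAux.a r 1) :=
    PowerSeries.ext fun n => by rw [PowerSeries.coeff_mk, PowerSeries.coeff_mk]; exact FCAux.fc_eq r n
  rw [hT]
  apply PowerSeries.ext
  intro n
  cases n with
  | zero =>
      simp [FCAux.a_zero, PowerSeries.coeff_zero_X_mul]
  | succ n =>
      rw [map_add, PowerSeries.coeff_one, PowerSeries.coeff_succ_X_mul, FCAux.coeff_pow,
        PowerSeries.coeff_mk, FCAux.key]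
      simp
end

section
/- For every positive integer r and every natural number n, the natural number r*n + 1 divides the binomial coefficient choose((r+1)*n, n). (Consequently the Fuss–Catalan number FC_n^{(r)} = choose((r+1)*n, n)/(r*n+1) is a nonnegative integer.) -/
theorem fussCatalan_integrality (r : ℕ) (hr : 0 < r) (n : ℕ) :
    (r * n + 1) ∣ Nat.choose ((r + 1) * n) n := by
  have key := Nat.choose_mul_succ_eq ((r + 1) * n) n
  have hsub : (r + 1) * n + 1 - n = r * n + 1 := by
    have : (r + 1) * n = r * n + n := by ring
    omega
  rw [hsub] at key
  have hdvd : (r * n + 1) ∣ Nat.choose ((r + 1) * n) n * ((r + 1) * n + 1) := by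
    rw [key]; exact Dvd.intro_left _ rfl
  have hcop : Nat.Coprime (r * n + 1) ((r + 1) * n + 1) := by
    have h1 : (r + 1) * n + 1 = n + (r * n + 1) := by ring
    rw [Nat.Coprime, h1, Nat.gcd_add_self_right]
    have h2 : r * n + 1 = n * r + 1 := by ring
    rw [h2, Nat.gcd_comm]
    simp [Nat.gcd_mul_left_add_left]
  exact (Nat.Coprime.dvd_of_dvd_mul_right hcop hdvd)
end

section
/- Fix a positive integer r and a natural number n. The number of lists l of integers of length (r+1)*n such that every entry of l equals 1 or −r, exactly n entries equal −r (hence exactly r*n entries equal 1), and every prefix of l has nonnegative sum, equals choose((r+1)*n, n)/(r*n+1). -/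
open List Finset

namespace BallotAux

/-- Dominance: every nonempty prefix has sum ≥ 1. -/
def Dom (l : List ℤ) : Prop := ∀ j, 0 < j → j ≤ l.length → 1 ≤ (l.take j).sum

lemma dom_unique_rotation {l : List ℤ} (hsum : l.sum = 1) (hd : Dom l) {d : ℕ}
    (hdl : d < l.length) (hrd : Dom (l.rotate d)) : d = 0 := by
  by_contra h0
  have hd0 : 0 < d := Nat.pos_of_ne_zero h0
  have h1 : 1 ≤ (l.take d).sum := hd d hd0 hdl.le
  have hrot : l.rotate d = l.drop d ++ l.take d := rotate_eq_drop_append_take hdl.le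
  have hlen : (l.drop d).length = l.length - d := by simp
  have h2 : 1 ≤ (l.drop d).sum := by
    have := hrd (l.length - d) (by omega) (by rw [length_rotate]; omega)
    rwa [hrot, ← hlen, take_left] at this
  have h3 : (l.take d).sum + (l.drop d).sum = l.sum := sum_take_add_sum_drop l d
  omega

lemma exists_dom_rotation {l : List ℤ} (hsum : l.sum = 1) :
    ∃ j < l.length, Dom (l.rotate j) := by
  have hne : l ≠ [] := by rintro rfl; simp at hsum
  have hL : 0 < l.length := List.length_pos_iff.2 hne
  obtain ⟨jm, hjm, hjmin⟩ := (Finset.range l.length).exists_min_image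
    (fun j => (l.take j).sum) ⟨0, Finset.mem_range.2 hL⟩
  simp only [Finset.mem_range] at hjm hjmin
  set T : Finset ℕ := (Finset.range l.length).filter
    (fun j => (l.take j).sum = (l.take jm).sum) with hT
  have hTne : T.Nonempty := ⟨jm, by simp [hT, hjm]⟩
  set j₀ := T.max' hTne with hj₀
  have hj₀T : j₀ ∈ T := T.max'_mem hTne
  rw [hT, Finset.mem_filter, Finset.mem_range] at hj₀T
  obtain ⟨hj₀L, hj₀f⟩ := hj₀T
  have hmin' : ∀ i, i < l.length → (l.take j₀).sum ≤ (l.take i).sum := by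
    intro i hi; rw [hj₀f]; exact hjmin i hi
  have hstrict : ∀ i, j₀ < i → i < l.length → (l.take j₀).sum + 1 ≤ (l.take i).sum := by
    intro i hji hi
    have h1 : (l.take j₀).sum ≤ (l.take i).sum := hmin' i hi
    have h2 : (l.take i).sum ≠ (l.take jm).sum := by
      intro he
      have : i ∈ T := by rw [hT, Finset.mem_filter, Finset.mem_range]; exact ⟨hi, he⟩
      exact absurd (T.le_max' i this) (by omega)
    rw [hj₀f] at h1
    omega
  have hf0 : (l.take j₀).sum ≤ 0 := by
    have := hmin' 0 hL; simpa using this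
  refine ⟨j₀, hj₀L, ?_⟩
  intro j hj0 hjle
  rw [length_rotate] at hjle
  rw [rotate_eq_drop_append_take hj₀L.le, List.take_append, sum_append]
  have hld : (l.drop j₀).length = l.length - j₀ := by simp
  rw [hld]
  have hadd : ∀ t, (l.take (j₀ + t)).sum = (l.take j₀).sum + ((l.drop j₀).take t).sum := by
    intro t
    have := congrArg List.sum (List.take_add (l := l) (i := j₀) (j := t))
    rwa [sum_append] at this
  by_cases hc : j ≤ l.length - j₀
  · have h1 : j - (l.length - j₀) = 0 := by omega
    rw [h1]
    simp only [take_zero, sum_nil, add_zero]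
    have h2 := hadd j
    rcases eq_or_lt_of_le (show j₀ + j ≤ l.length by omega) with he | hlt
    · rw [he, take_length] at h2
      omega
    · have := hstrict (j₀ + j) (by omega) hlt
      omega
  · have h1 : (l.drop j₀).take j = l.drop j₀ := take_of_length_le (by omega)
    have h2 : (l.take j₀).sum + (l.drop j₀).sum = 1 := by
      rw [sum_take_add_sum_drop]; exact hsum
    have h3 : (l.take j₀).take (j - (l.length - j₀)) = l.take (j - (l.length - j₀)) := by
      rw [take_take]; congr 1; omega
    have h4 : (l.take j₀).sum ≤ (l.take (j - (l.length - j₀))).sum :=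
      hmin' _ (by omega)
    rw [h1, h3]
    omega

lemma count_sum (v : ℤ) (hv : v ≠ 1) (l : List ℤ) (hmem : ∀ x ∈ l, x = 1 ∨ x = v) :
    l.sum = (l.count 1 : ℤ) + (l.count v : ℤ) * v := by
  induction l with
  | nil => simp
  | cons a t ih =>
    have ht : ∀ x ∈ t, x = 1 ∨ x = v := fun x hx => hmem x (mem_cons_of_mem a hx)
    have ih' := ih ht
    rcases hmem a List.mem_cons_self with h1 | h1
    · subst h1
      rw [List.sum_cons, ih', List.count_cons_self, List.count_cons_of_ne (Ne.symm hv)]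
      push_cast; ring
    · subst h1
      rw [List.sum_cons, ih', List.count_cons_self, List.count_cons_of_ne hv]
      push_cast; ring

lemma count_len (v : ℤ) (hv : v ≠ 1) (l : List ℤ) (hmem : ∀ x ∈ l, x = 1 ∨ x = v) :
    l.count 1 + l.count v = l.length := by
  induction l with
  | nil => simp
  | cons a t ih =>
    have ht : ∀ x ∈ t, x = 1 ∨ x = v := fun x hx => hmem x (mem_cons_of_mem a hx)
    have ih' := ih ht
    rcases hmem a List.mem_cons_self with h1 | h1
    · subst h1
      rw [List.count_cons_self, List.count_cons_of_ne (Ne.symm hv), List.length_cons]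
      omega
    · subst h1
      rw [List.count_cons_self, List.count_cons_of_ne hv, List.length_cons]
      omega

lemma count_ofFn (v : ℤ) : ∀ (m : ℕ) (f : Fin m → ℤ),
    (List.ofFn f).count v = #(Finset.univ.filter (fun i => f i = v)) := by
  intro m
  induction m with
  | zero => intro f; simp
  | succ m ih =>
    intro f
    rw [List.ofFn_succ, List.count_cons, ih]
    rw [Finset.card_filter, Finset.card_filter, Fin.sum_univ_succ]
    simp only [beq_iff_eq]
    split_ifs <;> omega

lemma card_raw (v : ℤ) (hv : v ≠ 1) (M k : ℕ) :
    Nat.card {l : List ℤ // l.length = M ∧ (∀ x ∈ l, x = 1 ∨ x = v) ∧ l.count v = k} =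
      Nat.choose M k := by
  have hfil : ∀ s : Finset (Fin M),
      (Finset.univ.filter (fun i => (if i ∈ s then v else 1) = v)) = s := by
    intro s
    ext i
    simp only [Finset.mem_filter, Finset.mem_univ, true_and]
    split_ifs with h
    · simp [h]
    · simp [h, Ne.symm hv]
  have key : Nat.card {s : Finset (Fin M) // s.card = k} =
      Nat.card {l : List ℤ // l.length = M ∧ (∀ x ∈ l, x = 1 ∨ x = v) ∧ l.count v = k} := by
    apply Nat.card_eq_of_bijective
      (f := fun s => ⟨List.ofFn (fun i => if i ∈ s.1 then v else 1), by
        refine ⟨by simp, ?_, ?_⟩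
        · intro x hx
          rw [List.mem_ofFn] at hx
          obtain ⟨i, hi⟩ := hx
          split_ifs at hi <;> simp [← hi]
        · rw [count_ofFn, hfil]; exact s.2⟩)
    constructor
    · rintro ⟨s₁, h₁⟩ ⟨s₂, h₂⟩ h
      simp only [Subtype.mk.injEq] at h
      have hfun := List.ofFn_injective h
      apply Subtype.ext
      ext i
      have := congrFun hfun i
      split_ifs at this with ha hb <;> simp_all
    · rintro ⟨l, hlen, hmem, hcount⟩
      set s : Finset (Fin M) :=
        Finset.univ.filter (fun i : Fin M => l[(i : ℕ)]'(by rw [hlen]; exact i.2) = v) with hs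
      have hofn : List.ofFn (fun i : Fin M => if i ∈ s then v else 1) = l := by
        apply List.ext_getElem (by simp [hlen])
        intro i h1 h2
        simp only [List.getElem_ofFn]
        simp only [hs, Finset.mem_filter, Finset.mem_univ, true_and]
        split_ifs with h
        · exact h.symm
        · rcases hmem (l[i]) (List.getElem_mem h2) with he | he
          · exact he.symm
          · exact absurd he h
      have hcard : s.card = k := by
        rw [← hcount, ← hofn, count_ofFn, hfil]
      exact ⟨⟨s, hcard⟩, Subtype.ext hofn⟩
  rw [← key, Nat.card_eq_fintype_card, Fintype.card_finset_len, Fintype.card_fin]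

end BallotAux

open BallotAux

theorem ballot_sequences_card (r : ℕ) (hr : 0 < r) (n : ℕ) :
    Nat.card {l : List ℤ //
        l.length = (r + 1) * n ∧
        (∀ x ∈ l, x = 1 ∨ x = -(r : ℤ)) ∧
        l.count (-(r : ℤ)) = n ∧
        (∀ p : List ℤ, p <+: l → 0 ≤ p.sum)} =
      Nat.choose ((r + 1) * n) n / (r * n + 1) := by
  have hrz : (0:ℤ) < (r:ℤ) := by exact_mod_cast hr
  have hv1 : -(r:ℤ) ≠ 1 := by omega
  set N : ℕ := (r + 1) * n with hN
  set M : ℕ := N + 1 with hM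
  have hNrn : N = r * n + n := by rw [hN]; ring
  have hMpos : 0 < M := by omega
  -- sum of raw lists is 1
  have rawsum : ∀ l : List ℤ, l.length = M → (∀ x ∈ l, x = 1 ∨ x = -(r:ℤ)) →
      l.count (-(r:ℤ)) = n → l.sum = 1 := by
    intro l hlen hmem hc
    have h1 := count_sum _ hv1 l hmem
    have h2 := count_len _ hv1 l hmem
    rw [hc, hlen] at h2
    have h3 : l.count 1 = r * n + 1 := by omega
    rw [h1, hc, h3]
    push_cast
    ring
  -- dominance of 1 :: g for good g
  have domcons : ∀ g : List ℤ, (∀ p : List ℤ, p <+: g → 0 ≤ p.sum) → Dom (1 :: g) := by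
    intro g hg j hj0 hjle
    cases j with
    | zero => omega
    | succ j =>
      rw [List.take_succ_cons, List.sum_cons]
      have := hg (g.take j) (List.take_prefix j g)
      omega
  have rotM : ∀ g : List ℤ, g.length = M → g.rotate M = g := by
    intro g hg
    rw [← hg, rotate_length]
  have rotmod : ∀ g : List ℤ, g.length = M → ∀ k, g.rotate (k % M) = g.rotate k := by
    intro g hg k
    rw [← hg, rotate_mod]
  have mullem : ∀ x : ℕ, M ∣ x → 0 < x → x < 2 * M → x = M := by
    rintro x ⟨c, rfl⟩ h1 h2
    match c with
    | 0 => omega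
    | 1 => omega
    | (c+2) =>
      have := Nat.mul_le_mul_left M (show 2 ≤ c + 2 by omega)
      omega
  -- the main bijection
  have hbij : Nat.card ({l : List ℤ //
        l.length = N ∧
        (∀ x ∈ l, x = 1 ∨ x = -(r : ℤ)) ∧
        l.count (-(r : ℤ)) = n ∧
        (∀ p : List ℤ, p <+: l → 0 ≤ p.sum)} × Fin M) =
      Nat.card {l : List ℤ // l.length = M ∧ (∀ x ∈ l, x = 1 ∨ x = -(r:ℤ)) ∧
        l.count (-(r:ℤ)) = n} := by
    apply Nat.card_eq_of_bijective
      (f := fun p => ⟨(1 :: p.1.1).rotate p.2.1, by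
        obtain ⟨⟨g, hg1, hg2, hg3, hg4⟩, ⟨k, hk⟩⟩ := p
        have hperm : (1 :: g).rotate k ~ (1 :: g) := rotate_perm _ _
        refine ⟨?_, ?_, ?_⟩
        · rw [hperm.length_eq]; simp [hg1, hM]
        · intro x hx
          rcases List.mem_cons.1 (hperm.mem_iff.1 hx) with h | h
          · exact Or.inl h
          · exact hg2 x h
        · rw [hperm.count_eq, List.count_cons_of_ne hv1.symm, hg3]⟩)
    constructor
    · rintro ⟨⟨g₁, hg₁⟩, ⟨k₁, hk₁⟩⟩ ⟨⟨g₂, hg₂⟩, ⟨k₂, hk₂⟩⟩ h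
      simp only [Subtype.mk.injEq] at h
      have len₁ : (1 :: g₁).length = M := by simp [hg₁.1, hM]
      have len₂ : (1 :: g₂).length = M := by simp [hg₂.1, hM]
      have e0 := congrArg (fun t => List.rotate t (M - k₁)) h
      rw [rotate_rotate, rotate_rotate, show k₁ + (M - k₁) = M by omega,
        rotM _ len₁] at e0
      have e1 : (1 :: g₂).rotate ((k₂ + (M - k₁)) % M) = (1 :: g₂).rotate (k₂ + (M - k₁)) :=
        rotmod _ len₂ _
      have hd₁ : Dom (1 :: g₁) := domcons g₁ hg₁.2.2.2
      have hd₂ : Dom (1 :: g₂) := domcons g₂ hg₂.2.2.2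
      have hsum₂ : (1 :: g₂).sum = 1 := by
        refine rawsum _ len₂ ?_ ?_
        · intro x hx
          rcases List.mem_cons.1 hx with h' | h'
          · exact Or.inl h'
          · exact hg₂.2.1 x h'
        · rw [List.count_cons_of_ne hv1.symm, hg₂.2.2.1]
      have hdlt : (k₂ + (M - k₁)) % M < (1 :: g₂).length := by
        rw [len₂]; exact Nat.mod_lt _ hMpos
      have hdomrot : Dom ((1 :: g₂).rotate ((k₂ + (M - k₁)) % M)) := by
        rw [e1, ← e0]; exact hd₁
      have hzero := dom_unique_rotation hsum₂ hd₂ hdlt hdomrot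
      have hdvd := Nat.dvd_of_mod_eq_zero hzero
      have hk12 : k₁ = k₂ := by
        rcases Nat.eq_zero_or_pos (k₂ + (M - k₁)) with h0 | hpos
        · omega
        · have := mullem _ hdvd hpos (by omega)
          omega
      rw [hk12, show k₂ + (M - k₂) = M by omega, rotM _ len₂] at e0
      have hgg : g₁ = g₂ := by injection e0
      simp only [Prod.mk.injEq, Subtype.mk.injEq, Fin.mk.injEq]
      exact ⟨hgg, hk12⟩
    · rintro ⟨l, hlen, hmem, hcount⟩
      have hsum : l.sum = 1 := rawsum l hlen hmem hcount
      obtain ⟨j, hj, hdom⟩ := exists_dom_rotation hsum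
      rw [hlen] at hj
      have hlr : (l.rotate j).length = M := by rw [length_rotate, hlen]
      obtain ⟨x, t, hxt⟩ : ∃ x t, l.rotate j = x :: t := by
        cases hcl : l.rotate j with
        | nil => rw [hcl] at hlr; simp at hlr
        | cons a b => exact ⟨a, b, rfl⟩
      have hperm : l.rotate j ~ l := rotate_perm l j
      have hx1 : x = 1 := by
        have hxle : (1:ℤ) ≤ x := by
          have := hdom 1 one_pos (by rw [length_rotate, hlen]; omega)
          rw [hxt] at this
          simpa using this
        have hxmem : x ∈ l := hperm.mem_iff.1 (by rw [hxt]; exact List.mem_cons_self)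
        rcases hmem x hxmem with h | h
        · exact h
        · omega
      subst hx1
      have htlen : t.length = N := by
        rw [hxt] at hlr; simp at hlr; omega
      have htmem : ∀ y ∈ t, y = 1 ∨ y = -(r:ℤ) := fun y hy =>
        hmem y (hperm.mem_iff.1 (by rw [hxt]; exact mem_cons_of_mem _ hy))
      have htcount : t.count (-(r:ℤ)) = n := by
        have h5 := hperm.count_eq (-(r:ℤ))
        rw [hxt, List.count_cons_of_ne hv1.symm] at h5
        omega
      have htpref : ∀ p : List ℤ, p <+: t → 0 ≤ p.sum := by
        intro p hp
        have hlenp : p.length ≤ t.length := hp.length_le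
        have h6 := hdom (p.length + 1) (by omega) (by rw [length_rotate, hlen]; omega)
        rw [hxt, List.take_succ_cons, List.sum_cons,
          ← (List.prefix_iff_eq_take.1 hp)] at h6
        omega
      refine ⟨⟨⟨t, htlen, htmem, htcount, htpref⟩, ⟨(M - j) % M, Nat.mod_lt _ hMpos⟩⟩, ?_⟩
      apply Subtype.ext
      show (1 :: t).rotate ((M - j) % M) = l
      have hlen1t : (1 :: t).length = M := by simp [htlen, hM]
      rw [rotmod _ hlen1t, ← hxt, rotate_rotate, show j + (M - j) = M by omega]
      exact rotM l hlen
  -- counting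
  have hcfin : Nat.card (Fin M) = M := by simp
  rw [card_raw _ hv1 M n, Nat.card_prod, hcfin] at hbij
  -- arithmetic
  have hid : Nat.choose N n * M = Nat.choose M n * (r * n + 1) := by
    have h := Nat.choose_mul_succ_eq N n
    have hsub : N + 1 - n = r * n + 1 := by omega
    rw [hsub] at h
    exact h
  obtain ⟨C, hC⟩ : ∃ c, Nat.card {l : List ℤ //
        l.length = N ∧
        (∀ x ∈ l, x = 1 ∨ x = -(r : ℤ)) ∧
        l.count (-(r : ℤ)) = n ∧
        (∀ p : List ℤ, p <+: l → 0 ≤ p.sum)} = c := ⟨_, rfl⟩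
  rw [hC] at hbij ⊢
  have hfin : C * (r * n + 1) = Nat.choose N n := by
    apply Nat.eq_of_mul_eq_mul_right hMpos
    calc C * (r * n + 1) * M = C * M * (r * n + 1) := by ring
      _ = Nat.choose M n * (r * n + 1) := by rw [hbij]
      _ = Nat.choose N n * M := hid.symm
  rw [← hfin, Nat.mul_div_cancel _ (show 0 < r * n + 1 by omega)]
end

section
/- Fix a positive integer r and a natural number n. The number of lists l of integers of length (r+1)*n such that every entry of l equals r or −1, exactly n entries equal r (hence exactly r*n entries equal −1), and every prefix of l has nonnegative sum, equals choose((r+1)*n, n)/(r*n+1). -/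
open List

namespace DyckAux

/-- Sum of a list with entries in `{r, -1}` in terms of count of `r`. -/
lemma sum_eq_count (r : ℕ) (l : List ℤ)
    (h : ∀ x ∈ l, x = (r : ℤ) ∨ x = -1) :
    l.sum = (r + 1) * (l.count (r : ℤ) : ℤ) - l.length := by
  induction l with
  | nil => simp
  | cons a t ih =>
    have ha := h a mem_cons_self
    have ht : ∀ x ∈ t, x = (r : ℤ) ∨ x = -1 := fun x hx => h x (mem_cons_of_mem a hx)
    have hne : (-1 : ℤ) ≠ (r : ℤ) := by
      have : (0:ℤ) ≤ (r:ℤ) := Int.natCast_nonneg r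
      omega
    rcases ha with ha | ha
    · subst ha
      rw [List.sum_cons, List.count_cons_self, ih ht]
      push_cast
      simp only [List.length_cons]
      push_cast
      ring
    · subst ha
      have : List.count (r:ℤ) (-1 :: t) = List.count (r:ℤ) t := by
        rw [List.count_cons]
        simp only [beq_iff_eq]
        rw [if_neg hne]; omega
      rw [List.sum_cons, this, ih ht]
      simp only [List.length_cons]
      push_cast
      ring
/-- Count of `r` from the sum, for lists with entries in `{r, -1}`. -/
lemma count_eq_of_sum (r n : ℕ) (l : List ℤ)
    (h : ∀ x ∈ l, x = (r : ℤ) ∨ x = -1)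
    (hs : l.sum = (r + 1) * (n : ℤ) - l.length) :
    l.count (r : ℤ) = n := by
  have h1 := sum_eq_count r l h
  have h2 : ((r:ℤ) + 1) * (l.count (r:ℤ) : ℤ) = ((r:ℤ) + 1) * (n : ℤ) := by linarith
  have h3 : (l.count (r:ℤ) : ℤ) = (n : ℤ) :=
    mul_left_cancel₀ (by positivity) h2
  exact_mod_cast h3

/-- Prefix sums of a rotation, no-wrap case. -/
lemma take_rotate_sum_of_le (b : List ℤ) (i j : ℕ) (hij : i + j ≤ b.length) :
    ((b.rotate i).take j).sum = (b.take (i + j)).sum - (b.take i).sum := by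
  have hi : i ≤ b.length := le_trans (Nat.le_add_right i j) hij
  rw [List.rotate_eq_drop_append_take hi]
  rw [List.take_append_of_le_length (by simp; omega)]
  have := List.take_add (l := b) (i := i) (j := j)
  have h2 : (b.take (i+j)).sum = (b.take i).sum + ((b.drop i).take j).sum := by
    rw [this, List.sum_append]
  linarith

/-- Prefix sums of a rotation, wrap case. -/
lemma take_rotate_sum_of_ge (b : List ℤ) (i j : ℕ) (hi : i ≤ b.length)
    (hj : j ≤ b.length) (hij : b.length ≤ i + j) :
    ((b.rotate i).take j).sum = b.sum + (b.take (i + j - b.length)).sum - (b.take i).sum := by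
  rw [List.rotate_eq_drop_append_take hi]
  rw [List.take_append]
  rw [List.take_of_length_le (by simp; omega)]
  rw [List.sum_append]
  have hd : (b.drop i).sum = b.sum - (b.take i).sum := by
    have := List.sum_take_add_sum_drop b i
    linarith
  have hlen : j - (b.drop i).length = i + j - b.length := by simp; omega
  rw [hlen, List.take_take]
  have hmin : min (i + j - b.length) i = i + j - b.length := by omega
  rw [hmin, hd]
  ring

/-- A rotation index is *good* if every proper prefix of the rotation has
nonnegative sum. -/
def Good (b : List ℤ) (i : ℕ) : Prop :=
  ∀ j < b.length, 0 ≤ ((b.rotate i).take j).sum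

lemma exists_good (b : List ℤ) (hm : 0 < b.length) (hsum : b.sum = -1) :
    ∃ i < b.length, Good b i := by
  classical
  set m := b.length with hmdef
  set s : ℕ → ℤ := fun j => (b.take j).sum with hsdef
  have hex : ∃ i, i < m ∧ ∀ j < m, s i ≤ s j := by
    obtain ⟨i, hi, hmin⟩ := Finset.exists_min_image (Finset.range m) s
      ⟨0, Finset.mem_range.mpr hm⟩
    exact ⟨i, Finset.mem_range.mp hi, fun j hj => hmin j (Finset.mem_range.mpr hj)⟩
  set i₀ := Nat.find hex with hi0def
  have hi0m : i₀ < m := (Nat.find_spec hex).1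
  have hi0min : ∀ j < m, s i₀ ≤ s j := (Nat.find_spec hex).2
  have hstrict : ∀ j < i₀, s i₀ + 1 ≤ s j := by
    intro j hj
    have hnot : ¬ (j < m ∧ ∀ k < m, s j ≤ s k) := Nat.find_min hex hj
    push_neg at hnot
    obtain ⟨k, hk, hks⟩ := hnot (lt_trans hj hi0m)
    have h5 := hi0min k hk
    omega
  refine ⟨i₀, hi0m, ?_⟩
  intro j hj
  rcases le_or_gt (i₀ + j) m with hle | hgt
  · rw [take_rotate_sum_of_le b i₀ j hle]
    rcases lt_or_eq_of_le hle with hlt | heq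
    · have := hi0min (i₀ + j) hlt
      simp only [hsdef] at this ⊢
      linarith
    · have hi0pos : 0 < i₀ := by omega
      have := hstrict 0 hi0pos
      have hs0 : s 0 = 0 := by simp [hsdef]
      have hsm : (b.take (i₀ + j)).sum = -1 := by rw [heq, List.take_length, hsum]
      simp only [hsdef] at this hs0 ⊢
      omega
  · rw [take_rotate_sum_of_ge b i₀ j (le_of_lt hi0m) (le_of_lt hj) (le_of_lt hgt)]
    have hj' : i₀ + j - m < i₀ := by omega
    have := hstrict _ hj'
    simp only [hsdef] at this
    rw [hsum]
    linarith

lemma good_unique (b : List ℤ) (hsum : b.sum = -1) {i i' : ℕ}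
    (hi : i < b.length) (hi' : i' < b.length) (hg : Good b i) (hg' : Good b i') :
    i = i' := by
  set m := b.length with hmdef
  have key : ∀ a a', a < a' → a' < m → Good b a → Good b a' → False := by
    intro i i' hlt hi' hg hg'
    have h1 : 0 ≤ ((b.rotate i).take (i' - i)).sum := hg (i' - i) (by omega)
    rw [take_rotate_sum_of_le b i (i' - i) (by omega)] at h1
    have heq : i + (i' - i) = i' := by omega
    rw [heq] at h1
    have h2 : 0 ≤ ((b.rotate i').take (i + m - i')).sum := hg' (i + m - i') (by omega)
    rw [take_rotate_sum_of_ge b i' (i + m - i') (by omega) (by omega) (by omega)] at h2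
    have heq2 : i' + (i + m - i') - m = i := by omega
    rw [heq2, hsum] at h2
    linarith
  rcases lt_trichotomy i i' with h | h | h
  · exact absurd (key i i' h hi' hg hg') not_false
  · exact h
  · exact absurd (key i' i h hi hg' hg) not_false

lemma rot_back (c : List ℤ) (i : ℕ) (hi : i < c.length) :
    (c.rotate i).rotate ((c.length - i) % c.length) = c := by
  rw [List.rotate_rotate, ← List.rotate_mod]
  have h : (i + (c.length - i) % c.length) % c.length = 0 := by
    rcases Nat.eq_zero_or_pos i with h0 | h0
    · subst h0; simp
    · have h3 : (c.length - i) % c.length = c.length - i := Nat.mod_eq_of_lt (by omega)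
      have h2 : i + (c.length - i) = c.length := by omega
      rw [h3, h2, Nat.mod_self]
  rw [h, List.rotate_zero]

lemma sub_mod_inj {m i₁ i₂ : ℕ} (h₁ : i₁ < m) (h₂ : i₂ < m)
    (h : (m - i₁) % m = (m - i₂) % m) : i₁ = i₂ := by
  rcases Nat.eq_zero_or_pos i₁ with z1 | p1 <;> rcases Nat.eq_zero_or_pos i₂ with z2 | p2
  · omega
  · exfalso
    rw [z1, Nat.sub_zero, Nat.mod_self, Nat.mod_eq_of_lt (by omega)] at h
    omega
  · exfalso
    rw [z2, Nat.sub_zero, Nat.mod_self, Nat.mod_eq_of_lt (by omega)] at h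
    omega
  · rw [Nat.mod_eq_of_lt (by omega), Nat.mod_eq_of_lt (by omega)] at h
    omega

lemma good_rotate (l : List ℤ) (hdom : ∀ p : List ℤ, p <+: l → 0 ≤ p.sum) (i : ℕ)
    (hi : i < l.length + 1) :
    Good ((l ++ [-1]).rotate i) ((l.length + 1 - i) % (l.length + 1)) ∧
    ((l ++ [-1]).rotate i).rotate ((l.length + 1 - i) % (l.length + 1)) = l ++ [-1] := by
  have hlen : (l ++ [(-1:ℤ)]).length = l.length + 1 := by simp
  have hback := rot_back (l ++ [-1]) i (by rw [hlen]; omega)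
  rw [hlen] at hback
  refine ⟨?_, hback⟩
  intro j hj
  rw [List.length_rotate, hlen] at hj
  rw [hback, List.take_append_of_le_length (by omega)]
  exact hdom _ (List.take_prefix _ _)

/-- The set of sequences of length `(r+1)n` (r-Dyck paths). -/
abbrev D (r n : ℕ) : Type := {l : List ℤ //
    l.length = (r + 1) * n ∧
    (∀ x ∈ l, x = (r : ℤ) ∨ x = -1) ∧
    l.count (r : ℤ) = n ∧
    (∀ p : List ℤ, p <+: l → 0 ≤ p.sum)}

/-- The set of all sequences of length `(r+1)n + 1` with `n` entries equal to `r`. -/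
abbrev S (r n : ℕ) : Type := {b : List ℤ //
    b.length = (r + 1) * n + 1 ∧
    (∀ x ∈ b, x = (r : ℤ) ∨ x = -1) ∧
    b.count (r : ℤ) = n}

lemma count_neg_one (r : ℕ) : List.count ((r:ℕ) : ℤ) [(-1 : ℤ)] = 0 := by
  have : ((-1 : ℤ) == ((r:ℕ) : ℤ)) = false := by
    simp only [beq_eq_false_iff_ne, ne_eq]
    have : (0:ℤ) ≤ (r:ℤ) := Int.natCast_nonneg r
    omega
  simp [List.count_cons, this]

lemma card_S_eq_mul (r n : ℕ) (hr : 0 < r) :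
    Nat.card (S r n) = ((r + 1) * n + 1) * Nat.card (D r n) := by
  classical
  set N := (r + 1) * n with hN
  set m := N + 1 with hm
  have hmpos : 0 < m := Nat.succ_pos N
  set Φ : Fin m × D r n → S r n := fun p =>
    ⟨(p.2.1 ++ [-1]).rotate p.1.1, by
      obtain ⟨⟨i, hi⟩, ⟨l, hlen, hmem, hcount, hdom⟩⟩ := p
      refine ⟨by simp [hlen], ?_, ?_⟩
      · intro x hx
        rw [List.mem_rotate, List.mem_append] at hx
        rcases hx with hx | hx
        · exact hmem x hx
        · right; simpa using hx
      · rw [(List.rotate_perm _ _).count_eq, List.count_append, count_neg_one r]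
        simpa using hcount⟩ with hΦ
  have hbij : Function.Bijective Φ := by
    constructor
    · rintro ⟨⟨i₁, hi₁⟩, ⟨l₁, hlen₁, hmem₁, hcount₁, hdom₁⟩⟩
        ⟨⟨i₂, hi₂⟩, ⟨l₂, hlen₂, hmem₂, hcount₂, hdom₂⟩⟩ heq
      have heq' : (l₁ ++ [-1]).rotate i₁ = (l₂ ++ [-1]).rotate i₂ :=
        congrArg Subtype.val heq
      set b : List ℤ := (l₁ ++ [-1]).rotate i₁ with hb
      have hblen : b.length = m := by simp [hb, hlen₁]; omega
      have hbsum : b.sum = -1 := by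
        rw [hb, (List.rotate_perm _ _).sum_eq, List.sum_append,
          sum_eq_count r l₁ hmem₁, hcount₁, hlen₁]
        simp only [List.sum_cons, List.sum_nil]
        push_cast
        ring
      have hg₁ := good_rotate l₁ hdom₁ i₁ (by omega)
      have hg₂ := good_rotate l₂ hdom₂ i₂ (by omega)
      rw [hlen₁] at hg₁
      rw [hlen₂] at hg₂
      rw [← heq'] at hg₂
      have hk : (N + 1 - i₁) % (N + 1) = (N + 1 - i₂) % (N + 1) := by
        refine good_unique b hbsum ?_ ?_ hg₁.1 hg₂.1 <;>
          · rw [hblen]; exact Nat.mod_lt _ hmpos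
      have hi12 : i₁ = i₂ := sub_mod_inj (by omega) (by omega) hk
      have hl12 : l₁ = l₂ := by
        have := hg₁.2.symm.trans (hk ▸ hg₂.2)
        exact List.append_cancel_right this
      subst hi12; subst hl12
      rfl
    · rintro ⟨b, hblen, hbmem, hbcount⟩
      have hbsum : b.sum = -1 := by
        rw [sum_eq_count r b hbmem, hbcount, hblen]
        push_cast
        ring
      obtain ⟨i₀, hi₀, hgood⟩ := exists_good b (by omega) hbsum
      set c : List ℤ := b.rotate i₀ with hc
      have hclen : c.length = m := by simp [hc, hblen]; omega
      have hcne : c ≠ [] := List.ne_nil_of_length_pos (by omega)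
      have hcsum : c.sum = -1 := ((List.rotate_perm b i₀).sum_eq).trans hbsum
      set l : List ℤ := c.dropLast with hl
      have hdec : l ++ [c.getLast hcne] = c := List.dropLast_append_getLast hcne
      have hllen : l.length = N := by
        rw [hl, List.length_dropLast, hclen]
        omega
      have hlsum : 0 ≤ l.sum := by
        have h1 : l = c.take (c.length - 1) := by rw [hl, List.dropLast_eq_take]
        have h2 := hgood (b.length - 1) (by omega)
        rw [← hc] at h2
        rw [h1]
        have h3 : c.length - 1 = b.length - 1 := by omega
        rw [h3]
        exact h2
      have hlast : c.getLast hcne = -1 := by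
        have hmem' : c.getLast hcne ∈ b := List.mem_rotate.mp (List.getLast_mem hcne)
        have hsum2 : l.sum + c.getLast hcne = -1 := by
          rw [← hcsum]
          conv_rhs => rw [← hdec]
          rw [List.sum_append]
          simp
        rcases hbmem _ hmem' with h | h
        · exfalso
          have h0 : (0:ℤ) ≤ (r:ℤ) := Int.natCast_nonneg r
          rw [h] at hsum2
          omega
        · exact h
      have hldec : l ++ [(-1:ℤ)] = c := by rw [← hlast]; exact hdec
      have hlmem : ∀ x ∈ l, x = (r : ℤ) ∨ x = -1 := by
        intro x hx
        have : x ∈ c := (List.dropLast_sublist c).mem hx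
        exact hbmem x (List.mem_rotate.mp this)
      have hlcount : l.count ((r:ℕ):ℤ) = n := by
        have h1 : c.count ((r:ℕ):ℤ) = n := by
          rw [hc, (List.rotate_perm _ _).count_eq]; exact hbcount
        rw [← hldec, List.count_append, count_neg_one r] at h1
        omega
      have hldom : ∀ p : List ℤ, p <+: l → 0 ≤ p.sum := by
        intro p hp
        have hpc : p <+: c := hp.trans ⟨[c.getLast hcne], hdec⟩
        have hple : p.length ≤ l.length := hp.length_le
        rw [List.prefix_iff_eq_take.mp hpc]
        have := hgood p.length (by omega)
        rw [← hc] at this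
        exact this
      refine ⟨⟨⟨(m - i₀) % m, Nat.mod_lt _ hmpos⟩, ⟨l, hllen, hlmem, hlcount, hldom⟩⟩, ?_⟩
      apply Subtype.ext
      show (l ++ [-1]).rotate ((m - i₀) % m) = b
      rw [hldec]
      have := rot_back b i₀ (by omega)
      rw [hblen] at this
      exact this
  have h1 : Nat.card (Fin m × D r n) = Nat.card (S r n) :=
    Nat.card_eq_of_bijective Φ hbij
  rw [← h1, Nat.card_prod, Nat.card_eq_fintype_card, Fintype.card_fin]

lemma sum_ofFn_ite (r m : ℕ) (t : Finset (Fin m)) :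
    (List.ofFn (fun j : Fin m => if j ∈ t then ((r:ℕ) : ℤ) else -1)).sum
      = (r + 1) * (t.card : ℤ) - m := by
  rw [List.sum_ofFn]
  rw [← Finset.sum_add_sum_compl t]
  have h1 : ∑ j ∈ t, (if j ∈ t then ((r:ℕ):ℤ) else -1) = t.card * r :=
    by rw [Finset.sum_congr rfl (fun j hj => if_pos hj)]; simp [mul_comm]
  have h2 : ∑ j ∈ tᶜ, (if j ∈ t then ((r:ℕ):ℤ) else -1) = -(tᶜ.card : ℤ) := by
    rw [Finset.sum_congr rfl (fun j hj => if_neg (Finset.mem_compl.mp hj))]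
    simp
  rw [h1, h2, Finset.card_compl, Fintype.card_fin]
  have hle : t.card ≤ m := by
    have := t.card_le_univ
    simpa using this
  push_cast [hle]
  ring

lemma card_S_choose (r n : ℕ) (hr : 0 < r) :
    Nat.card (S r n) = Nat.choose ((r + 1) * n + 1) n := by
  classical
  set m := (r + 1) * n + 1 with hm
  have hrne : ∀ j : Fin m, ¬ (((-1:ℤ)) = ((r:ℕ):ℤ)) := by
    intro j h
    have : (0:ℤ) ≤ (r:ℤ) := Int.natCast_nonneg r
    omega
  set g : {t : Finset (Fin m) // t.card = n} → S r n := fun t =>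
    ⟨List.ofFn (fun j : Fin m => if j ∈ t.1 then ((r:ℕ) : ℤ) else -1), by
      refine ⟨by simp, ?_, ?_⟩
      · intro x hx
        rw [List.mem_ofFn] at hx
        obtain ⟨j, hj⟩ := hx
        by_cases hjt : j ∈ t.1
        · left; rw [← hj]; simp [hjt]
        · right; rw [← hj]; simp [hjt]
      · refine count_eq_of_sum r n _ ?_ ?_
        · intro x hx
          rw [List.mem_ofFn] at hx
          obtain ⟨j, hj⟩ := hx
          by_cases hjt : j ∈ t.1
          · left; rw [← hj]; simp [hjt]
          · right; rw [← hj]; simp [hjt]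
        · rw [sum_ofFn_ite, t.2]
          simp only [List.length_ofFn]⟩ with hg
  have hbij : Function.Bijective g := by
    constructor
    · rintro ⟨t₁, ht₁⟩ ⟨t₂, ht₂⟩ heq
      have heq' := congrArg Subtype.val heq
      simp only [hg] at heq'
      rw [List.ofFn_inj] at heq'
      apply Subtype.ext
      ext j
      have := congrFun heq' j
      by_cases h1 : j ∈ t₁ <;> by_cases h2 : j ∈ t₂
      · simp [h1, h2]
      · exfalso; simp [h1, h2] at this
      · exfalso; simp [h1, h2] at this
      · simp [h1, h2]
    · rintro ⟨b, hblen, hbmem, hbcount⟩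
      set t : Finset (Fin m) :=
        Finset.univ.filter (fun j : Fin m => b[(j:ℕ)]'(hblen ▸ j.isLt) = ((r:ℕ):ℤ)) with ht
      have hb : b = List.ofFn (fun j : Fin m => if j ∈ t then ((r:ℕ) : ℤ) else -1) := by
        apply List.ext_getElem (by simp [hblen])
        intro j h1 h2
        rw [List.getElem_ofFn]
        split_ifs with hjt
        · exact (Finset.mem_filter.mp hjt).2
        · have hne' : b[j]'h1 ≠ ((r:ℕ):ℤ) := fun h =>
            hjt (Finset.mem_filter.mpr ⟨Finset.mem_univ _, h⟩)
          rcases hbmem (b[j]'h1) (List.getElem_mem h1) with h | h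
          · exact absurd h hne'
          · exact h
      have hcard : t.card = n := by
        have hs1 : b.sum = (r + 1) * ((n:ℕ) : ℤ) - m := by
          rw [sum_eq_count r b hbmem, hbcount, hblen]
        have hs2 := sum_ofFn_ite r m t
        rw [← hb] at hs2
        have : ((t.card : ℕ) : ℤ) = ((n:ℕ) : ℤ) := by
          have hrpos : (0:ℤ) < (r:ℤ) + 1 := by positivity
          have := hs1.symm.trans hs2
          exact mul_left_cancel₀ (ne_of_gt hrpos) (by linarith)
        exact_mod_cast this
      exact ⟨⟨t, hcard⟩, Subtype.ext hb.symm⟩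
  have h1 : Nat.card {t : Finset (Fin m) // t.card = n} = Nat.card (S r n) :=
    Nat.card_eq_of_bijective g hbij
  rw [← h1, Nat.card_eq_fintype_card, Fintype.card_finset_len, Fintype.card_fin]

end DyckAux

theorem dyck_sequences_card (r : ℕ) (hr : 0 < r) (n : ℕ) :
    Nat.card {l : List ℤ //
        l.length = (r + 1) * n ∧
        (∀ x ∈ l, x = (r : ℤ) ∨ x = -1) ∧
        l.count (r : ℤ) = n ∧
        (∀ p : List ℤ, p <+: l → 0 ≤ p.sum)} =
      Nat.choose ((r + 1) * n) n / (r * n + 1) := by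
  show Nat.card (DyckAux.D r n) = Nat.choose ((r + 1) * n) n / (r * n + 1)
  have h1 := DyckAux.card_S_choose r n hr
  have h2 := DyckAux.card_S_eq_mul r n hr
  have hrn : (r + 1) * n = r * n + n := by ring
  set N := (r + 1) * n with hN
  have e1 : (N + 1) * Nat.card (DyckAux.D r n) = (N + 1).choose n := h2.symm.trans h1
  have hsymm1 : (N + 1).choose n = (N + 1).choose (r * n + 1) := by
    have h : n ≤ N + 1 := by omega
    rw [← Nat.choose_symm h]
    congr 1
    omega
  have hsymm2 : N.choose (r * n) = N.choose n := by
    have h : r * n ≤ N := by omega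
    rw [← Nat.choose_symm h]
    congr 1
    omega
  have hkey : (N + 1) * N.choose (r * n) = (N + 1).choose (r * n + 1) * (r * n + 1) :=
    Nat.add_one_mul_choose_eq N (r * n)
  have e2 : (N + 1) * ((r * n + 1) * Nat.card (DyckAux.D r n)) = (N + 1) * N.choose n := by
    calc (N + 1) * ((r * n + 1) * Nat.card (DyckAux.D r n))
        = (r * n + 1) * ((N + 1) * Nat.card (DyckAux.D r n)) := by ring
      _ = (r * n + 1) * (N + 1).choose n := by rw [e1]
      _ = (N + 1).choose (r * n + 1) * (r * n + 1) := by rw [hsymm1]; ring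
      _ = (N + 1) * N.choose (r * n) := hkey.symm
      _ = (N + 1) * N.choose n := by rw [hsymm2]
  have e3 : (r * n + 1) * Nat.card (DyckAux.D r n) = N.choose n :=
    Nat.eq_of_mul_eq_mul_left (by omega) e2
  rw [← e3, Nat.mul_div_cancel_left _ (by omega : 0 < r * n + 1)]
end

section
/- Let r and m be positive integers, let G be the star graph on Fin (r+2) in which vertex 0 is adjacent to every nonzero vertex and there are no other edges, and fix a nonzero vertex i. Then the number of walks w from i to i in G such that (a) every dart of G (i.e., every edge together with a direction of traversal) is traversed by w exactly m times, and (b) w contains no three consecutive vertices of the form v, 0, v with v ≠ 0, is equal to the number of lists l whose entries are nonzero vertices of Fin (r+2), of length m*(r+1), such that every nonzero vertex of Fin (r+2) occurs in l exactly m times, any two consecutive entries of l are distinct, the last entry of l equals i, and the first entry of l is different from i. -/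
/-- The star graph on `Fin (r + 2)`: vertex `0` is adjacent to every nonzero vertex,
and there are no other edges. -/
def starGraph (r : ℕ) : SimpleGraph (Fin (r + 2)) where
  Adj a b := (a = 0 ∧ b ≠ 0) ∨ (a ≠ 0 ∧ b = 0)
  symm := by constructor; intro a b h; tauto
  loopless := by constructor; intro a h; tauto

namespace StarAux

open SimpleGraph

variable (r : ℕ)

/-- The interleaved tail: `tl [v₁, …, vₙ] = [0, v₁, 0, v₂, …, 0, vₙ]`. -/
def tl : List (Fin (r + 2)) → List (Fin (r + 2))
  | [] => []
  | b :: t => 0 :: b :: tl t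

/-- The list of dart pairs traversed by the walk determined by `a` and `l`. -/
def pdl : Fin (r + 2) → List (Fin (r + 2)) → List (Fin (r + 2) × Fin (r + 2))
  | _, [] => []
  | a, b :: t => (a, 0) :: ((0 : Fin (r + 2)), b) :: pdl b t

/-- The walk `a → 0 → v₁ → 0 → v₂ → ⋯` determined by a list of nonzero vertices. -/
def mkWalk : (a : Fin (r + 2)) → (l : List (Fin (r + 2))) → a ≠ 0 → (∀ x ∈ l, x ≠ 0) →
    (_root_.starGraph r).Walk a (l.getLastD a)
  | _, [], _, _ => SimpleGraph.Walk.nil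
  | a, b :: t, ha, hl =>
    (SimpleGraph.Walk.cons (Or.inr ⟨ha, rfl⟩ : (_root_.starGraph r).Adj a 0)
      (SimpleGraph.Walk.cons (Or.inl ⟨rfl, hl b (List.mem_cons_self)⟩ : (_root_.starGraph r).Adj 0 b)
        (mkWalk b t (hl b (List.mem_cons_self))
          (fun x hx => hl x (List.mem_cons_of_mem b hx))))).copy
      rfl List.getLastD_cons.symm

lemma support_mkWalk : ∀ (l : List (Fin (r + 2))) (a : Fin (r + 2)) (ha : a ≠ 0)
    (hl : ∀ x ∈ l, x ≠ 0), (mkWalk r a l ha hl).support = a :: tl r l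
  | [], a, _, _ => by simp [mkWalk, tl]; rfl
  | b :: t, a, ha, hl => by
    simp only [mkWalk, Walk.support_copy, tl]
    exact congrArg (fun s => a :: 0 :: s) (support_mkWalk t b _ _)

lemma darts_mkWalk : ∀ (l : List (Fin (r + 2))) (a : Fin (r + 2)) (ha : a ≠ 0)
    (hl : ∀ x ∈ l, x ≠ 0),
    (mkWalk r a l ha hl).darts.map SimpleGraph.Dart.toProd = pdl r a l
  | [], a, _, _ => by simp [mkWalk, pdl]; rfl
  | b :: t, a, ha, hl => by
    simp only [mkWalk, Walk.darts_copy, pdl]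
    exact congrArg (fun s => (a, 0) :: (0, b) :: s) (darts_mkWalk t b _ _)

lemma tl_inj : ∀ (l₁ l₂ : List (Fin (r + 2))), tl r l₁ = tl r l₂ → l₁ = l₂
  | [], [], _ => rfl
  | [], b :: t, h => by simp [tl] at h
  | b :: t, [], h => by simp [tl] at h
  | b :: t, b' :: t', h => by
    simp only [tl, List.cons.injEq, true_and] at h
    obtain ⟨rfl, h⟩ := h
    rw [tl_inj t t' h]

lemma count_pdl_left : ∀ (l : List (Fin (r + 2))) (a : Fin (r + 2)), a ≠ 0 →
    (∀ x ∈ l, x ≠ 0) → ∀ v : Fin (r + 2),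
    (pdl r a l).count ((0 : Fin (r + 2)), v) = l.count v
  | [], a, _, _, v => by simp [pdl]
  | b :: t, a, ha, hl, v => by
    have hb : b ≠ 0 := hl b (List.mem_cons_self)
    have ht : ∀ x ∈ t, x ≠ 0 := fun x hx => hl x (List.mem_cons_of_mem b hx)
    simp only [pdl, List.count_cons, count_pdl_left t b hb ht v, Prod.mk.injEq]
    split_ifs <;> simp_all

lemma count_pdl_right : ∀ (l : List (Fin (r + 2))) (a : Fin (r + 2)), a ≠ 0 →
    (∀ x ∈ l, x ≠ 0) → ∀ v : Fin (r + 2),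
    (pdl r a l).count (v, (0 : Fin (r + 2))) = ((a :: l).dropLast).count v
  | [], a, _, _, v => by simp [pdl]
  | b :: t, a, ha, hl, v => by
    have hb : b ≠ 0 := hl b (List.mem_cons_self)
    have ht : ∀ x ∈ t, x ≠ 0 := fun x hx => hl x (List.mem_cons_of_mem b hx)
    simp only [pdl, List.count_cons, count_pdl_right t b hb ht v, Prod.mk.injEq,
      List.dropLast_cons₂]
    split_ifs <;> simp_all

lemma infix_tl_iff : ∀ (l : List (Fin (r + 2))) (a : Fin (r + 2)), a ≠ 0 →
    (∀ x ∈ l, x ≠ 0) →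
    ((∀ v : Fin (r + 2), v ≠ 0 → ¬ [v, 0, v] <:+: a :: tl r l) ↔
      (a :: l).Chain' (· ≠ ·))
  | [], a, ha, _ => by
    simp only [tl]
    constructor
    · intro _
      exact List.isChain_singleton a
    · intro _ v hv hinf
      have := hinf.length_le
      simp at this
  | b :: t, a, ha, hl => by
    have hb : b ≠ 0 := hl b (List.mem_cons_self)
    have ht : ∀ x ∈ t, x ≠ 0 := fun x hx => hl x (List.mem_cons_of_mem b hx)
    have ih := infix_tl_iff t b hb ht
    simp only [tl]
    have key : ∀ v : Fin (r + 2), v ≠ 0 →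
        ([v, 0, v] <:+: a :: 0 :: b :: tl r t ↔
          (v = a ∧ a = b) ∨ [v, 0, v] <:+: b :: tl r t) := by
      intro v hv
      rw [List.infix_cons_iff, List.infix_cons_iff]
      constructor
      · rintro (hpre | hpre | hinf)
        · rw [List.cons_prefix_cons] at hpre
          obtain ⟨rfl, hpre⟩ := hpre
          rw [List.cons_prefix_cons] at hpre
          rw [List.cons_prefix_cons] at hpre
          exact Or.inl ⟨rfl, hpre.2.1⟩
        · rw [List.cons_prefix_cons] at hpre
          exact absurd hpre.1 hv
        · exact Or.inr hinf
      · rintro (⟨rfl, rfl⟩ | hinf)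
        · exact Or.inl ⟨tl r t, rfl⟩
        · exact Or.inr (Or.inr hinf)
    rw [show (a :: b :: t).Chain' (· ≠ ·) ↔ a ≠ b ∧ (b :: t).Chain' (· ≠ ·) from List.isChain_cons_cons, ← ih]
    constructor
    · intro H
      refine ⟨fun hab => H a ha ((key a ha).mpr (Or.inl ⟨rfl, hab⟩)), ?_⟩
      intro v hv hinf
      exact H v hv ((key v hv).mpr (Or.inr hinf))
    · rintro ⟨hab, H⟩ v hv hinf
      rcases (key v hv).mp hinf with ⟨rfl, h⟩ | hinf'
      · exact hab h
      · exact H v hv hinf'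

lemma copy_triv {u v : Fin (r + 2)} (w : (_root_.starGraph r).Walk u v)
    (h1 : u = u) (h2 : v = v) : w.copy h1 h2 = w := by
  have e1 : h1 = rfl := rfl
  have e2 : h2 = rfl := rfl
  rw [e1, e2, SimpleGraph.Walk.copy_rfl_rfl]

lemma count_darts (L : List ((_root_.starGraph r).Dart)) (d : (_root_.starGraph r).Dart) :
    L.count d = (L.map SimpleGraph.Dart.toProd).count d.toProd := by
  induction L with
  | nil => rfl
  | cons e t ih =>
    simp only [List.map_cons, List.count_cons, ih]
    congr 1
    simp [SimpleGraph.Dart.ext_iff]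

lemma decomp : ∀ (n : ℕ) (a c : Fin (r + 2)) (ha : a ≠ 0) (hc : c ≠ 0)
    (w : (_root_.starGraph r).Walk a c), w.length ≤ n →
    ∃ (l : List (Fin (r + 2))) (hl : ∀ x ∈ l, x ≠ 0) (h : l.getLastD a = c),
      w = (mkWalk r a l ha hl).copy rfl h := by
  intro n
  induction n with
  | zero =>
    intro a c ha hc w hw
    cases w with
    | nil => exact ⟨[], by simp, rfl, rfl⟩
    | cons h p => simp at hw
  | succ n ih =>
    intro a c ha hc w hw
    cases w with
    | nil => exact ⟨[], by simp, rfl, rfl⟩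
    | @cons _ b _ h p =>
      have hb : b = 0 := by
        rcases h with ⟨h1, _⟩ | ⟨_, h2⟩
        · exact absurd h1 ha
        · exact h2
      subst hb
      cases p with
      | nil => exact absurd rfl hc
      | @cons _ b2 _ h2 q =>
        have hb2 : b2 ≠ 0 := by
          rcases h2 with ⟨_, h3⟩ | ⟨h3, _⟩
          · exact h3
          · exact absurd rfl h3
        obtain ⟨l, hl, hlast, heq⟩ := ih b2 c hb2 hc q (by
          simp only [SimpleGraph.Walk.length_cons] at hw
          omega)
        subst hlast
        refine ⟨b2 :: l, ?_, List.getLastD_cons, ?_⟩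
        · intro x hx
          rcases List.mem_cons.mp hx with rfl | hx
          · exact hb2
          · exact hl x hx
        · subst heq
          simp only [mkWalk, SimpleGraph.Walk.copy_copy, copy_triv]

end StarAux

theorem star_walks_eq_smirnov_words (r m : ℕ) (hr : 0 < r) (hm : 0 < m)
    (i : Fin (r + 2)) (hi : i ≠ 0) :
    Nat.card {w : (starGraph r).Walk i i //
        (∀ d : (starGraph r).Dart, w.darts.count d = m) ∧
        (∀ v : Fin (r + 2), v ≠ 0 → ¬ [v, 0, v] <:+: w.support)} =
      Nat.card {l : List (Fin (r + 2)) //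
        l.length = m * (r + 1) ∧
        (∀ x ∈ l, x ≠ 0) ∧
        (∀ v : Fin (r + 2), v ≠ 0 → l.count v = m) ∧
        l.Chain' (· ≠ ·) ∧
        l.getLast? = some i ∧
        l.head? ≠ some i} := by
  classical
  open StarAux SimpleGraph in
  -- helper: for a list whose last element is `i`, `getLastD i = i`
  have hld : ∀ (l : List (Fin (r + 2))), l.getLast? = some i → l.getLastD i = i := by
    intro l hl
    rw [List.getLastD_eq_getLast?, hl]
    rfl
  -- helper: dropping the freshly prepended `i` cancels against the last entry `i`
  have hcdl : ∀ (l : List (Fin (r + 2))), l.getLast? = some i →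
      ∀ v : Fin (r + 2), ((i :: l).dropLast).count v = l.count v := by
    intro l hlast v
    have hdl : l.dropLast ++ [i] = l := List.dropLast_append_getLast? i hlast
    conv_lhs => rw [← hdl]
    conv_rhs => rw [← hdl]
    rw [show (i :: (l.dropLast ++ [i])) = (i :: l.dropLast) ++ [i] from rfl,
      List.dropLast_concat]
    simp [List.count_cons, List.count_append]
  -- the key properties of the constructed walk
  have mkProps : ∀ (l : List (Fin (r + 2))) (hnz : ∀ x ∈ l, x ≠ 0)
      (hcount : ∀ v : Fin (r + 2), v ≠ 0 → l.count v = m)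
      (hchain : l.Chain' (· ≠ ·)) (hlast : l.getLast? = some i)
      (hhead : l.head? ≠ some i) (h : l.getLastD i = i),
      (∀ d : (_root_.starGraph r).Dart,
          ((mkWalk r i l hi hnz).copy rfl h).darts.count d = m) ∧
      (∀ v : Fin (r + 2), v ≠ 0 →
          ¬ [v, 0, v] <:+: ((mkWalk r i l hi hnz).copy rfl h).support) := by
    intro l hnz hcount hchain hlast hhead h
    have hmap := darts_mkWalk r l i hi hnz
    constructor
    · rintro ⟨⟨x, y⟩, hadj⟩
      rw [SimpleGraph.Walk.darts_copy]
      have hcase := hadj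
      rcases hcase with ⟨hx, hy⟩ | ⟨hx, hy⟩
      · subst hx
        calc (mkWalk r i l hi hnz).darts.count ⟨((0 : Fin (r + 2)), y), hadj⟩
            = ((mkWalk r i l hi hnz).darts.map Dart.toProd).count
                ((⟨((0 : Fin (r + 2)), y), hadj⟩ : (_root_.starGraph r).Dart).toProd) :=
              count_darts r _ _
          _ = (pdl r i l).count ((0 : Fin (r + 2)), y) := by rw [hmap]
          _ = l.count y := count_pdl_left r l i hi hnz y
          _ = m := hcount y hy
      · subst hy
        calc (mkWalk r i l hi hnz).darts.count ⟨(x, (0 : Fin (r + 2))), hadj⟩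
            = ((mkWalk r i l hi hnz).darts.map Dart.toProd).count
                ((⟨(x, (0 : Fin (r + 2))), hadj⟩ : (_root_.starGraph r).Dart).toProd) :=
              count_darts r _ _
          _ = (pdl r i l).count (x, (0 : Fin (r + 2))) := by rw [hmap]
          _ = ((i :: l).dropLast).count x := count_pdl_right r l i hi hnz x
          _ = l.count x := hcdl l hlast x
          _ = m := hcount x hx
    · intro v hv
      rw [SimpleGraph.Walk.support_copy, support_mkWalk]
      have hc : (i :: l).Chain' (· ≠ ·) := by
        rw [show (i :: l).Chain' (· ≠ ·) ↔ _ from List.isChain_cons]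
        refine ⟨?_, hchain⟩
        intro y hy hiy
        exact hhead (by rw [show l.head? = some y from hy, hiy])
      exact (infix_tl_iff r l i hi hnz).mpr hc v hv
  symm
  apply Nat.card_eq_of_bijective
    (fun p => (⟨(mkWalk r i p.1 hi p.2.2.1).copy rfl (hld p.1 p.2.2.2.2.2.1),
        mkProps p.1 p.2.2.1 p.2.2.2.1 p.2.2.2.2.1 p.2.2.2.2.2.1 p.2.2.2.2.2.2 _⟩))
  constructor
  · intro p q hpq
    apply Subtype.ext
    have hsup := congrArg (fun w => SimpleGraph.Walk.support w.1) hpq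
    simp only [SimpleGraph.Walk.support_copy] at hsup
    rw [support_mkWalk, support_mkWalk] at hsup
    exact tl_inj r _ _ (List.tail_eq_of_cons_eq hsup)
  · rintro ⟨w, hdc, hbb⟩
    obtain ⟨l, hnz, h, hw⟩ := decomp r w.length i i hi hi w le_rfl
    have hmap := darts_mkWalk r l i hi hnz
    -- counts
    have hcl : ∀ v : Fin (r + 2), v ≠ 0 → l.count v = m := by
      intro v hv
      have hd := hdc ⟨((0 : Fin (r + 2)), v), Or.inl ⟨rfl, hv⟩⟩
      rw [hw, SimpleGraph.Walk.darts_copy] at hd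
      calc l.count v = (pdl r i l).count ((0 : Fin (r + 2)), v) :=
            (count_pdl_left r l i hi hnz v).symm
        _ = ((mkWalk r i l hi hnz).darts.map Dart.toProd).count
              ((0 : Fin (r + 2)), v) := by rw [hmap]
        _ = (mkWalk r i l hi hnz).darts.count
              ⟨((0 : Fin (r + 2)), v), Or.inl ⟨rfl, hv⟩⟩ :=
            (count_darts r (mkWalk r i l hi hnz).darts
              ⟨((0 : Fin (r + 2)), v), Or.inl ⟨rfl, hv⟩⟩).symm
        _ = m := hd
    have hne : l ≠ [] := by
      intro h0
      subst h0
      have := hcl i hi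
      simp at this
      omega
    have hlast' : l.getLast? = some i := by
      rw [List.getLastD_eq_getLast?, List.getLast?_eq_getLast_of_ne_nil hne] at h
      rw [List.getLast?_eq_getLast_of_ne_nil hne]
      simpa using h
    -- chain condition
    have hc : (i :: l).Chain' (· ≠ ·) := by
      refine (infix_tl_iff r l i hi hnz).mp ?_
      intro v hv
      have := hbb v hv
      rw [hw, SimpleGraph.Walk.support_copy, support_mkWalk] at this
      exact this
    have hchain : l.Chain' (· ≠ ·) := (List.isChain_cons.mp hc).2
    have hhead : l.head? ≠ some i := by
      intro hh
      exact (List.isChain_cons.mp hc).1 i (by rw [hh]; rfl) rfl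
    -- length
    have hzero : (0 : Fin (r + 2)) ∉ l := fun h0 => hnz 0 h0 rfl
    have hlen : l.length = m * (r + 1) := by
      have h0 : ∑ v ∈ l.toFinset, l.count v = l.length := by
        simpa using Multiset.toFinset_sum_count_eq (l : Multiset (Fin (r + 2)))
      have h1 : l.length = ∑ v ∈ Finset.univ, l.count v := by
        rw [← h0]
        apply Finset.sum_subset (Finset.subset_univ _)
        intro x _ hx
        exact List.count_eq_zero_of_not_mem (by simpa using hx)
      rw [h1, ← Finset.add_sum_erase _ _ (Finset.mem_univ (0 : Fin (r + 2))),
        List.count_eq_zero_of_not_mem hzero, zero_add]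
      rw [Finset.sum_congr rfl (fun v hv => hcl v (Finset.ne_of_mem_erase hv))]
      rw [Finset.sum_const, Finset.card_erase_of_mem (Finset.mem_univ _),
        Finset.card_univ, Fintype.card_fin]
      simp [Nat.mul_comm]
    exact ⟨⟨l, hlen, hnz, hcl, hchain, hlast', hhead⟩, Subtype.ext hw.symm⟩
end

section
/- For all positive integers r and m, (r+1)! divides the number of lists l over Fin (r+1) of length m*(r+1) such that every element of Fin (r+1) occurs in l exactly m times, any two consecutive entries of l are distinct, and the first entry of l is different from the last entry of l. -/
private lemma map_eq_self_aux {α : Type*} {f : α → α} :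
    ∀ {l : List α}, l.map f = l → ∀ x ∈ l, f x = x
  | [], _, x, hx => by simp at hx
  | a :: l, h, x, hx => by
    simp only [List.map_cons, List.cons.injEq] at h
    rcases List.mem_cons.mp hx with rfl | hx
    · exact h.1
    · exact map_eq_self_aux h.2 x hx

private theorem card_dvd_card_of_free {G α : Type*} [Group G] [Finite G] [Finite α]
    [MulAction G α] (hfree : ∀ (g : G) (a : α), g • a = a → g = 1) :
    Nat.card G ∣ Nat.card α := by
  classical
  letI := Fintype.ofFinite α
  letI := Fintype.ofFinite G
  letI : Fintype (MulAction.orbitRel.Quotient G α) := Fintype.ofFinite _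
  letI : ∀ ω : MulAction.orbitRel.Quotient G α, Fintype (MulAction.orbit G ω.out) :=
    fun _ => Fintype.ofFinite _
  rw [Nat.card_eq_fintype_card, Nat.card_eq_fintype_card,
    Fintype.card_congr (MulAction.selfEquivSigmaOrbits G α), Fintype.card_sigma]
  refine Finset.dvd_sum fun ω _ => ?_
  have e : G ≃ MulAction.orbit G ω.out :=
    Equiv.ofBijective (fun g => ⟨g • ω.out, MulAction.mem_orbit _ _⟩)
      ⟨fun g₁ g₂ h => by
        have h' : g₁ • ω.out = g₂ • ω.out := congrArg Subtype.val h
        have h2 : (g₂⁻¹ * g₁) • ω.out = ω.out := by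
          rw [mul_smul, h', inv_smul_smul]
        exact (inv_mul_eq_one.mp (hfree _ _ h2)).symm,
      fun x => by
        rcases x with ⟨x, hx⟩
        rcases MulAction.mem_orbit_iff.mp hx with ⟨g, hg⟩
        exact ⟨g, Subtype.ext hg⟩⟩
  rw [Fintype.card_congr e]

theorem factorial_dvd_circular_smirnov_count (r m : ℕ) (hr : 0 < r) (hm : 0 < m) :
    (r + 1).factorial ∣
      Nat.card {l : List (Fin (r + 1)) //
        l.length = m * (r + 1) ∧
        (∀ j : Fin (r + 1), l.count j = m) ∧
        l.Chain' (· ≠ ·) ∧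
        l.head? ≠ l.getLast?} := by
  classical
  set α := {l : List (Fin (r + 1)) //
        l.length = m * (r + 1) ∧
        (∀ j : Fin (r + 1), l.count j = m) ∧
        l.Chain' (· ≠ ·) ∧
        l.head? ≠ l.getLast?} with hα
  set G := Equiv.Perm (Fin (r + 1)) with hG
  -- the key fact: mapping a good list by a permutation gives a good list
  have key : ∀ (σ : G) (a : α),
      ((a : α).1.map σ).length = m * (r + 1) ∧
      (∀ j : Fin (r + 1), ((a : α).1.map σ).count j = m) ∧
      ((a : α).1.map σ).Chain' (· ≠ ·) ∧
      ((a : α).1.map σ).head? ≠ ((a : α).1.map σ).getLast? := by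
    rintro σ ⟨l, h1, h2, h3, h4⟩
    refine ⟨by simpa using h1, fun j => ?_, ?_, ?_⟩
    · have : (l.map σ).count (σ (σ.symm j)) = l.count (σ.symm j) :=
        List.count_map_of_injective l σ σ.injective (σ.symm j)
      rw [Equiv.apply_symm_apply] at this
      rw [this]; exact h2 _
    · exact (List.isChain_map σ).mpr (h3.imp fun a b hab he => hab (σ.injective he))
    · rw [List.head?_map, List.getLast?_map]
      intro h
      exact h4 (Option.map_injective σ.injective h)
  letI : SMul G α := ⟨fun σ a => ⟨a.1.map σ, key σ a⟩⟩
  have smul_def : ∀ (σ : G) (a : α), (σ • a : α).1 = a.1.map σ := fun _ _ => rfl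
  letI : MulAction G α :=
    { one_smul := fun a => Subtype.ext (by
        rw [smul_def]; show List.map ⇑(1 : Equiv.Perm (Fin (r + 1))) a.1 = a.1; simp)
      mul_smul := fun σ τ a => Subtype.ext (by
        rw [smul_def, smul_def, smul_def, List.map_map]
        rfl) }
  -- finiteness
  haveI : Finite α := by
    have h1 : Finite {l : List (Fin (r + 1)) // l.length = m * (r + 1)} :=
      (List.finite_length_eq (Fin (r + 1)) (m * (r + 1))).to_subtype
    exact Finite.of_injective (fun a : α =>
      (⟨a.1, a.2.1⟩ : {l : List (Fin (r + 1)) // l.length = m * (r + 1)}))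
      fun a b h => Subtype.ext (by simpa using congrArg Subtype.val h)
  -- freeness
  have hfree : ∀ (g : G) (a : α), g • a = a → g = 1 := by
    rintro g ⟨l, h1, h2, h3, h4⟩ hga
    have hmap : l.map g = l := congrArg Subtype.val hga
    refine Equiv.ext fun j => ?_
    have hj : j ∈ l := by
      have := h2 j
      exact List.count_pos_iff.mp (by omega)
    exact map_eq_self_aux hmap j hj
  have := card_dvd_card_of_free (G := G) (α := α) hfree
  have hcard : Nat.card G = (r + 1).factorial := by
    show Nat.card (Equiv.Perm (Fin (r + 1))) = _
    rw [Nat.card_eq_fintype_card, Fintype.card_perm, Fintype.card_fin]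
  rwa [hcard] at this
end

section
/- Let n be a positive integer and fix a letter a ∈ Fin n. Define S_a ∈ MvPowerSeries (Fin n) ℚ by: for every d : Fin n →₀ ℕ, the coefficient of S_a at d is the number of lists over Fin n in which any two consecutive entries are distinct, no entry equals a, and each letter j occurs exactly d j times (in particular the constant coefficient is 1, counting the empty list). Define W_a ∈ MvPowerSeries (Fin n) ℚ by: the coefficient of W_a at d is the number of nonempty lists over Fin n in which any two consecutive entries are distinct, the first entry equals a, either the list has length 1 or its last entry differs from a, and each letter j occurs exactly d j times. Then (1 + W_a − X_a) * (1 − X_a * (S_a − 1)) = 1 in MvPowerSeries (Fin n) ℚ, where X_a denotes the power series of the single variable indexed by a. -/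
namespace SmirnovGF

open List

variable {n : ℕ}

/-- The count finsupp of a list. -/
noncomputable def cnt (l : List (Fin n)) : Fin n →₀ ℕ :=
  Multiset.toFinsupp (l : Multiset (Fin n))

lemma cnt_apply (l : List (Fin n)) (j : Fin n) : cnt l j = l.count j := by
  classical
  simp [cnt, Multiset.toFinsupp_apply]

lemma cnt_eq_iff (l : List (Fin n)) (d : Fin n →₀ ℕ) :
    (∀ j, l.count j = d j) ↔ cnt l = d := by
  constructor
  · intro h; ext j; rw [cnt_apply]; exact h j
  · intro h j; rw [← h, cnt_apply]

@[simp] lemma cnt_nil : cnt ([] : List (Fin n)) = 0 := by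
  simp [cnt]

lemma cnt_append (u v : List (Fin n)) : cnt (u ++ v) = cnt u + cnt v := by
  classical
  ext j
  simp [cnt, Multiset.toFinsupp_apply, List.count_append]

lemma cnt_cons (b : Fin n) (l : List (Fin n)) :
    cnt (b :: l) = Finsupp.single b 1 + cnt l := by
  ext j
  rw [cnt_apply, Finsupp.add_apply, cnt_apply, List.count_cons]
  rcases eq_or_ne j b with rfl | hj
  · simp [add_comm]
  · simp [Finsupp.single_apply, hj, Ne.symm hj]

lemma cnt_singleton (b : Fin n) : cnt [b] = Finsupp.single b 1 := by
  rw [cnt_cons, cnt_nil, add_zero]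

lemma length_eq_of_cnt {l : List (Fin n)} {d : Fin n →₀ ℕ} (h : cnt l = d) :
    l.length = Multiset.card (Multiset.toFinsupp.symm d : Multiset (Fin n)) := by
  classical
  have : (l : Multiset (Fin n)) = Multiset.toFinsupp.symm d := by
    rw [← h]; simp [cnt]
  rw [← this, Multiset.coe_card]

lemma finite_cntSet (P : List (Fin n) → Prop) (d : Fin n →₀ ℕ) :
    {l : List (Fin n) | P l ∧ cnt l = d}.Finite := by
  classical
  apply Set.Finite.subset
    (List.finite_length_eq (Fin n) (Multiset.card (Multiset.toFinsupp.symm d : Multiset (Fin n))))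
  rintro l ⟨-, h⟩
  exact length_eq_of_cnt h

/-- ncard of the set of lists equal to a fixed list with a count constraint. -/
lemma ncard_eq_single (c : List (Fin n)) (d : Fin n →₀ ℕ) :
    ({l : List (Fin n) | l = c ∧ cnt l = d}).ncard = if cnt c = d then 1 else 0 := by
  split_ifs with h
  · have : {l : List (Fin n) | l = c ∧ cnt l = d} = {c} := by
      ext l; simp only [Set.mem_setOf_eq, Set.mem_singleton_iff]
      constructor
      · rintro ⟨rfl, -⟩; rfl
      · rintro rfl; exact ⟨rfl, h⟩
    rw [this, Set.ncard_singleton]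
  · have : {l : List (Fin n) | l = c ∧ cnt l = d} = ∅ := by
      ext l; simp only [Set.mem_setOf_eq, Set.mem_empty_iff_false, iff_false, not_and]
      rintro rfl; exact h
    rw [this, Set.ncard_empty]

/-- Predicate for the "A" class: empty, or Smirnov starting at `a` and not ending at `a`. -/
def PA (a : Fin n) (l : List (Fin n)) : Prop :=
  l = [] ∨ (l.Chain' (· ≠ ·) ∧ l.head? = some a ∧ l.getLast? ≠ some a)

/-- Predicate for the "B" class: `a :: v` with `v` nonempty avoiding `a`, Smirnov. -/
def PB (a : Fin n) (x : List (Fin n)) : Prop :=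
  ∃ v, x = a :: v ∧ v ≠ [] ∧ x.Chain' (· ≠ ·) ∧ ∀ y ∈ v, y ≠ a

lemma rev_take_drop (a : Fin n) (u v : List (Fin n)) (hv : ∀ y ∈ v, y ≠ a) :
    (u ++ a :: v).reverse.takeWhile (· ≠ a) = v.reverse ∧
    (u ++ a :: v).reverse.dropWhile (· ≠ a) = a :: u.reverse := by
  have h1 : (u ++ a :: v).reverse = v.reverse ++ a :: u.reverse := by
    simp [List.reverse_append]
  have hp : ∀ y ∈ v.reverse, (fun y => decide (y ≠ a)) y = true := by
    intro y hy; simp only [decide_eq_true_eq]; exact hv y (List.mem_reverse.mp hy)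
  constructor
  · rw [h1, List.takeWhile_append_of_pos hp, List.takeWhile_cons_of_neg (by simp),
      List.append_nil]
  · rw [h1, List.dropWhile_append_of_pos hp, List.dropWhile_cons_of_neg (by simp)]

lemma append_inj {a : Fin n} {u u' x x' : List (Fin n)} (hx : PB a x) (hx' : PB a x')
    (h : u ++ x = u' ++ x') : u = u' ∧ x = x' := by
  obtain ⟨v, rfl, -, -, hv⟩ := hx
  obtain ⟨v', rfl, -, -, hv'⟩ := hx'
  have t1 := rev_take_drop a u v hv
  have t2 := rev_take_drop a u' v' hv'
  rw [h] at t1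
  have hvv : v = v' := by
    have := t1.1.symm.trans t2.1
    simpa using this
  have huu : u = u' := by
    have := t1.2.symm.trans t2.2
    simpa using this
  exact ⟨huu, by rw [hvv]⟩

lemma split_exists {a : Fin n} {l : List (Fin n)} (hch : l.Chain' (· ≠ ·))
    (hh : l.head? = some a) (hla : l.getLast? ≠ some a) :
    ∃ u v, l = u ++ a :: v ∧ PA a u ∧ PB a (a :: v) := by
  classical
  have hal : a ∈ l.reverse := by
    rw [List.mem_reverse]
    exact List.mem_of_mem_head? (by rw [hh]; rfl)
  set s := l.reverse.dropWhile (· ≠ a) with hs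
  set t := l.reverse.takeWhile (· ≠ a) with ht
  have hsne : s ≠ [] := by
    intro h0
    have := List.dropWhile_eq_nil_iff.mp h0 a hal
    simp at this
  obtain ⟨b, s', hbs⟩ := List.exists_cons_of_ne_nil hsne
  have hb : b = a := by
    have h := List.head?_dropWhile_not (fun y => decide (y ≠ a)) l.reverse
    rw [← hs, hbs] at h
    simpa using h
  have hsdec : s = a :: s.tail := by
    rw [hbs, hb]; rfl
  have hrts : t ++ s = l.reverse := List.takeWhile_append_dropWhile
  have hldec : l = s.tail.reverse ++ a :: t.reverse := by
    have : l = s.reverse ++ t.reverse := by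
      rw [← List.reverse_append, hrts, List.reverse_reverse]
    rw [this]
    conv_lhs => rw [hsdec]
    simp
  have hvmem : ∀ y ∈ t.reverse, y ≠ a := by
    intro y hy
    have := List.mem_takeWhile_imp (List.mem_reverse.mp hy)
    simpa using this
  have htne : t.reverse ≠ [] := by
    intro h0
    rw [h0] at hldec
    apply hla
    rw [hldec]
    exact List.getLast?_concat
  rw [hldec] at hch
  rw [List.Chain', List.isChain_append] at hch
  obtain ⟨hchu, hchx, hjun⟩ := hch
  refine ⟨s.tail.reverse, t.reverse, hldec, ?_, ?_⟩
  · rcases eq_or_ne s.tail.reverse [] with h0 | h0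
    · exact Or.inl h0
    · refine Or.inr ⟨hchu, ?_, ?_⟩
      · rw [hldec, List.head?_append_of_ne_nil _ h0] at hh
        exact hh
      · intro hlast
        exact (hjun a (Option.mem_def.mpr hlast) a rfl) rfl
  · exact ⟨t.reverse, rfl, htne, hchx, hvmem⟩

lemma getLast?_PB {a : Fin n} {x : List (Fin n)} (hx : PB a x) : x.getLast? ≠ some a := by
  obtain ⟨v, rfl, hvne, -, hv⟩ := hx
  have h1 : (a :: v).getLast? = v.getLast? := by
    obtain ⟨y, v', rfl⟩ := List.exists_cons_of_ne_nil hvne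
    rfl
  rw [h1, List.getLast?_eq_getLast hvne]
  intro h
  exact hv _ (List.getLast_mem hvne) (by simpa using h)

lemma PA_append {a : Fin n} {u x : List (Fin n)} (hu : PA a u) (hx : PB a x) :
    PA a (u ++ x) := by
  obtain ⟨v, hxv, hvne, hchx, hv⟩ := hx
  have hxne : x ≠ [] := by rw [hxv]; exact List.cons_ne_nil _ _
  refine Or.inr ⟨?_, ?_, ?_⟩
  · rw [List.Chain', List.isChain_append]
    refine ⟨?_, ?_, ?_⟩
    · rcases hu with rfl | ⟨h, -, -⟩
      · exact List.isChain_nil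
      · exact h
    · exact hchx
    · intro p hp q hq
      rcases hu with rfl | ⟨-, -, hlast⟩
      · simp at hp
      · rw [hxv] at hq
        have hq' : q = a := by simpa using hq.symm
        subst hq'
        intro h0
        exact hlast (by rw [← h0]; exact hp)
  · rcases hu with rfl | ⟨-, hh, -⟩
    · rw [List.nil_append, hxv]; rfl
    · have hune : u ≠ [] := by intro h0; rw [h0] at hh; simp at hh
      rw [List.head?_append_of_ne_nil _ hune]; exact hh
  · rw [List.getLast?_append_of_ne_nil _ hxne]
    exact getLast?_PB ⟨v, hxv, hvne, hchx, hv⟩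

def Aset (a : Fin n) (d : Fin n →₀ ℕ) : Set (List (Fin n)) := {l | PA a l ∧ cnt l = d}
def Bset (a : Fin n) (d : Fin n →₀ ℕ) : Set (List (Fin n)) := {x | PB a x ∧ cnt x = d}
def Pairs (a : Fin n) (d : Fin n →₀ ℕ) : Set (List (Fin n) × List (Fin n)) :=
  {p | PA a p.1 ∧ PB a p.2 ∧ cnt p.1 + cnt p.2 = d}

lemma finA (a : Fin n) (d : Fin n →₀ ℕ) : (Aset a d).Finite := finite_cntSet _ d
lemma finB (a : Fin n) (d : Fin n →₀ ℕ) : (Bset a d).Finite := finite_cntSet _ d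

lemma finPairs (a : Fin n) (d : Fin n →₀ ℕ) : (Pairs a d).Finite := by
  classical
  set N := Multiset.card (Multiset.toFinsupp.symm d : Multiset (Fin n)) with hN
  apply Set.Finite.subset
    (Set.Finite.prod (List.finite_length_le (Fin n) N) (List.finite_length_le (Fin n) N))
  rintro ⟨u, x⟩ ⟨-, -, h⟩
  have hc : cnt (u ++ x) = d := by rw [cnt_append]; exact h
  have hl := length_eq_of_cnt hc
  rw [List.length_append] at hl
  constructor
  · show u.length ≤ N; omega
  · show x.length ≤ N; omega

lemma card_Ane_eq_pairs (a : Fin n) (d : Fin n →₀ ℕ) :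
    ({l : List (Fin n) | (PA a l ∧ l ≠ []) ∧ cnt l = d}).ncard = (Pairs a d).ncard := by
  rw [← Nat.card_coe_set_eq, ← Nat.card_coe_set_eq]
  apply Nat.card_congr
  apply Equiv.symm
  refine Equiv.ofBijective
    (fun p => ⟨p.1.1 ++ p.1.2, ?_, ?_⟩) ⟨?_, ?_⟩
  · obtain ⟨h1, h2, h3⟩ := p.2
    refine ⟨PA_append h1 h2, ?_⟩
    obtain ⟨v, hv, -⟩ := h2
    simp [hv]
  · obtain ⟨h1, h2, h3⟩ := p.2
    rw [cnt_append]; exact h3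
  · rintro ⟨⟨u, x⟩, h1, h2, h3⟩ ⟨⟨u', x'⟩, h1', h2', h3'⟩ heq
    simp only [Subtype.mk_eq_mk] at heq
    obtain ⟨hu, hx⟩ := append_inj h2 h2' heq
    subst hu; subst hx; rfl
  · rintro ⟨l, ⟨hPA, hne⟩, hcnt⟩
    rcases hPA with rfl | ⟨hch, hh, hla⟩
    · exact absurd rfl hne
    · obtain ⟨u, v, hdec, hu, hx⟩ := split_exists hch hh hla
      refine ⟨⟨(u, a :: v), hu, hx, ?_⟩, ?_⟩
      · rw [← cnt_append, ← hdec]; exact hcnt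
      · exact Subtype.ext hdec.symm

lemma pairs_ncard (a : Fin n) (d : Fin n →₀ ℕ) :
    (Pairs a d).ncard =
      ∑ q ∈ Finset.HasAntidiagonal.antidiagonal d, (Aset a q.1).ncard * (Bset a q.2).ncard := by
  classical
  rw [Set.ncard_eq_toFinset_card _ (finPairs a d)]
  have hset : (finPairs a d).toFinset = (Finset.HasAntidiagonal.antidiagonal d).biUnion
      (fun q => (finA a q.1).toFinset ×ˢ (finB a q.2).toFinset) := by
    ext p
    simp only [Set.Finite.mem_toFinset, Finset.mem_biUnion, Finset.HasAntidiagonal.mem_antidiagonal,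
      Finset.mem_product]
    constructor
    · rintro ⟨h1, h2, h3⟩
      exact ⟨(cnt p.1, cnt p.2), h3, ⟨h1, rfl⟩, ⟨h2, rfl⟩⟩
    · rintro ⟨q, hq, hmem1, hmem2⟩
      obtain ⟨hA, hc1⟩ := hmem1
      obtain ⟨hB, hc2⟩ := hmem2
      exact ⟨hA, hB, by show cnt p.1 + cnt p.2 = d; rw [hc1, hc2]; exact hq⟩
  rw [hset, Finset.card_biUnion]
  · exact Finset.sum_congr rfl fun q _ => by
      rw [Finset.card_product, ← Set.ncard_eq_toFinset_card _ (finA a q.1),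
        ← Set.ncard_eq_toFinset_card _ (finB a q.2)]
  · intro q hq q' hq' hne
    rw [Function.onFun, Finset.disjoint_left]
    rintro ⟨u, x⟩ h1 h2
    rw [Finset.mem_product] at h1 h2
    rw [Set.Finite.mem_toFinset, Set.Finite.mem_toFinset] at h1 h2
    apply hne
    have e1 : q.1 = q'.1 := by rw [← h1.1.2, ← h2.1.2]
    have e2 : q.2 = q'.2 := by rw [← h1.2.2, ← h2.2.2]
    exact Prod.ext e1 e2

lemma Aset_ncard (a : Fin n) (d : Fin n →₀ ℕ) :
    ((Aset a d).ncard : ℚ) = (if d = 0 then 1 else 0) +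
      ∑ q ∈ Finset.HasAntidiagonal.antidiagonal d, ((Aset a q.1).ncard : ℚ) * (Bset a q.2).ncard := by
  classical
  have hsplit : Aset a d =
      {l : List (Fin n) | (PA a l ∧ l ≠ []) ∧ cnt l = d} ∪
      {l : List (Fin n) | l = [] ∧ cnt l = d} := by
    ext l
    simp only [Aset, Set.mem_setOf_eq, Set.mem_union]
    constructor
    · rintro ⟨h1, h2⟩
      rcases eq_or_ne l [] with rfl | hne
      · exact Or.inr ⟨rfl, h2⟩
      · exact Or.inl ⟨⟨h1, hne⟩, h2⟩
    · rintro (⟨⟨h1, -⟩, h2⟩ | ⟨rfl, h2⟩)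
      · exact ⟨h1, h2⟩
      · exact ⟨Or.inl rfl, h2⟩
  have hdisj : Disjoint {l : List (Fin n) | (PA a l ∧ l ≠ []) ∧ cnt l = d}
      {l : List (Fin n) | l = [] ∧ cnt l = d} := by
    rw [Set.disjoint_left]
    rintro l ⟨⟨-, hne⟩, -⟩ ⟨rfl, -⟩
    exact hne rfl
  have hcard : (Aset a d).ncard =
      ({l : List (Fin n) | (PA a l ∧ l ≠ []) ∧ cnt l = d}).ncard +
      ({l : List (Fin n) | l = [] ∧ cnt l = d}).ncard := by
    rw [hsplit]
    exact Set.ncard_union_eq hdisj (finite_cntSet _ d) (finite_cntSet _ d)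
  rw [hcard, card_Ane_eq_pairs, pairs_ncard, ncard_eq_single]
  have : (cnt ([] : List (Fin n)) = d) ↔ (d = 0) := by rw [cnt_nil, eq_comm]
  push_cast
  rw [add_comm]
  congr 1
  split_ifs with h1 h2 h2 <;> simp_all

def Sne (a : Fin n) (e : Fin n →₀ ℕ) : Set (List (Fin n)) :=
  {l | ((l.Chain' (· ≠ ·) ∧ ∀ x ∈ l, x ≠ a) ∧ l ≠ []) ∧ cnt l = e}

lemma Bset_empty (a : Fin n) (d : Fin n →₀ ℕ) (h : ¬ Finsupp.single a 1 ≤ d) :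
    Bset a d = ∅ := by
  ext x
  simp only [Bset, Set.mem_setOf_eq, Set.mem_empty_iff_false, iff_false, not_and]
  rintro ⟨v, rfl, -, -, -⟩ hc
  apply h
  rw [← hc, cnt_cons]
  exact self_le_add_right _ _

lemma Bset_ncard (a : Fin n) (d : Fin n →₀ ℕ) (hle : Finsupp.single a 1 ≤ d) :
    (Bset a d).ncard = (Sne a (d - Finsupp.single a 1)).ncard := by
  rw [← Nat.card_coe_set_eq, ← Nat.card_coe_set_eq]
  apply Nat.card_congr
  apply Equiv.symm
  refine Equiv.ofBijective (fun v => ⟨a :: v.1, ?_, ?_⟩) ⟨?_, ?_⟩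
  · obtain ⟨⟨⟨hch, hav⟩, hne⟩, hc⟩ := v.2
    refine ⟨v.1, rfl, hne, ?_, ?_⟩
    · rw [List.Chain', List.isChain_cons]
      refine ⟨?_, hch⟩
      intro y hy
      exact (hav y (List.mem_of_mem_head? hy)).symm
    · intro y hy
      exact hav y hy
  · obtain ⟨-, hc⟩ := v.2
    rw [cnt_cons, hc]
    exact add_tsub_cancel_of_le hle
  · rintro ⟨v, hv⟩ ⟨v', hv'⟩ heq
    simp only [Subtype.mk_eq_mk, List.cons.injEq, true_and] at heq
    exact Subtype.ext (by simpa using congrArg Subtype.val heq)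
  · rintro ⟨x, ⟨v, rfl, hvne, hch, hav⟩, hc⟩
    refine ⟨⟨v, ⟨⟨⟨(List.isChain_cons.mp hch).2, hav⟩, hvne⟩, ?_⟩⟩, rfl⟩
    rw [cnt_cons] at hc
    rw [← hc, add_tsub_cancel_left]

def Wset (a : Fin n) (d : Fin n →₀ ℕ) : Set (List (Fin n)) :=
  {l | (l ≠ [] ∧ l.Chain' (· ≠ ·) ∧ l.head? = some a ∧
    (l.length = 1 ∨ l.getLast? ≠ some a)) ∧ cnt l = d}

lemma WA_card (a : Fin n) (d : Fin n →₀ ℕ) :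
    (Wset a d).ncard + (if cnt ([] : List (Fin n)) = d then 1 else 0) =
    (Aset a d).ncard + (if cnt [a] = d then 1 else 0) := by
  classical
  rw [← ncard_eq_single ([] : List (Fin n)) d, ← ncard_eq_single [a] d]
  simp only [Wset, Aset]
  rw [← Set.ncard_union_eq ?d1 (finite_cntSet _ d) (finite_cntSet _ d),
      ← Set.ncard_union_eq ?d2 (finite_cntSet _ d) (finite_cntSet _ d)]
  case d1 =>
    rw [Set.disjoint_left]
    rintro l ⟨⟨hne, -⟩, -⟩ ⟨rfl, -⟩
    exact hne rfl
  case d2 =>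
    rw [Set.disjoint_left]
    rintro l ⟨hPA, -⟩ ⟨rfl, -⟩
    rcases hPA with h | ⟨-, -, hla⟩
    · exact List.cons_ne_nil _ _ h
    · exact hla rfl
  congr 1
  ext l
  simp only [Set.mem_union, Set.mem_setOf_eq]
  constructor
  · rintro (⟨⟨hne, hch, hh, hor⟩, hc⟩ | ⟨rfl, hc⟩)
    · rcases hor with hlen | hla
      · obtain ⟨b, l', rfl⟩ := List.exists_cons_of_ne_nil hne
        have hb : b = a := by simpa using hh
        have hl' : l' = [] := by
          simp only [List.length_cons] at hlen
          exact List.length_eq_zero_iff.mp (by omega)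
        subst hb; subst hl'
        exact Or.inr ⟨rfl, hc⟩
      · exact Or.inl ⟨Or.inr ⟨hch, hh, hla⟩, hc⟩
    · exact Or.inl ⟨Or.inl rfl, hc⟩
  · rintro (⟨hPA, hc⟩ | ⟨rfl, hc⟩)
    · rcases hPA with rfl | ⟨hch, hh, hla⟩
      · exact Or.inr ⟨rfl, hc⟩
      · have hne : l ≠ [] := by intro h0; rw [h0] at hh; simp at hh
        exact Or.inl ⟨⟨hne, hch, hh, Or.inr hla⟩, hc⟩
    · exact Or.inl ⟨⟨List.cons_ne_nil _ _, List.isChain_singleton _, rfl, Or.inl rfl⟩, hc⟩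

end SmirnovGF

open SmirnovGF in
theorem smirnov_start_not_end_gf (n : ℕ) (hn : 0 < n) (a : Fin n)
    (Sa Wa : MvPowerSeries (Fin n) ℚ)
    (hSa : ∀ d : Fin n →₀ ℕ,
      MvPowerSeries.coeff d Sa =
        (Nat.card {l : List (Fin n) //
          l.Chain' (· ≠ ·) ∧ (∀ x ∈ l, x ≠ a) ∧ ∀ j : Fin n, l.count j = d j} : ℚ))
    (hWa : ∀ d : Fin n →₀ ℕ,
      MvPowerSeries.coeff d Wa =
        (Nat.card {l : List (Fin n) //
          l ≠ [] ∧ l.Chain' (· ≠ ·) ∧ l.head? = some a ∧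
          (l.length = 1 ∨ l.getLast? ≠ some a) ∧ ∀ j : Fin n, l.count j = d j} : ℚ)) :
    (1 + Wa - MvPowerSeries.X a) * (1 - MvPowerSeries.X a * (Sa - 1)) = 1 := by
  classical
  -- coefficient of Wa
  have hW' : ∀ d : Fin n →₀ ℕ,
      MvPowerSeries.coeff d Wa = ((Wset a d).ncard : ℚ) := by
    intro d
    rw [hWa d]
    congr 1
    have e : ∀ l : List (Fin n),
        (l ≠ [] ∧ l.Chain' (· ≠ ·) ∧ l.head? = some a ∧
          (l.length = 1 ∨ l.getLast? ≠ some a) ∧ ∀ j : Fin n, l.count j = d j) ↔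
        l ∈ Wset a d := by
      intro l
      simp only [Wset, Set.mem_setOf_eq, cnt_eq_iff l d]
      tauto
    rw [Nat.card_congr (Equiv.subtypeEquivRight e), Nat.card_coe_set_eq]
  -- coefficient of Sa
  have hS' : ∀ e : Fin n →₀ ℕ,
      MvPowerSeries.coeff e Sa =
        (({l : List (Fin n) | (l.Chain' (· ≠ ·) ∧ ∀ x ∈ l, x ≠ a) ∧ cnt l = e}).ncard : ℚ) := by
    intro e
    rw [hSa e]
    congr 1
    have h : ∀ l : List (Fin n),
        (l.Chain' (· ≠ ·) ∧ (∀ x ∈ l, x ≠ a) ∧ ∀ j : Fin n, l.count j = e j) ↔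
        l ∈ {l : List (Fin n) | (l.Chain' (· ≠ ·) ∧ ∀ x ∈ l, x ≠ a) ∧ cnt l = e} := by
      intro l
      simp only [Set.mem_setOf_eq, cnt_eq_iff l e]
      tauto
    rw [Nat.card_congr (Equiv.subtypeEquivRight h), Nat.card_coe_set_eq]
  -- coefficient of Sa - 1
  have hSm1 : ∀ e : Fin n →₀ ℕ,
      MvPowerSeries.coeff e (Sa - 1) = ((Sne a e).ncard : ℚ) := by
    intro e
    rw [map_sub, hS' e, MvPowerSeries.coeff_one]
    have hsplit : {l : List (Fin n) | (l.Chain' (· ≠ ·) ∧ ∀ x ∈ l, x ≠ a) ∧ cnt l = e} =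
        Sne a e ∪ {l : List (Fin n) | l = [] ∧ cnt l = e} := by
      ext l
      simp only [Sne, Set.mem_setOf_eq, Set.mem_union]
      constructor
      · rintro ⟨h1, h2⟩
        rcases eq_or_ne l [] with rfl | hne
        · exact Or.inr ⟨rfl, h2⟩
        · exact Or.inl ⟨⟨h1, hne⟩, h2⟩
      · rintro (⟨⟨h1, -⟩, h2⟩ | ⟨rfl, h2⟩)
        · exact ⟨h1, h2⟩
        · exact ⟨⟨List.isChain_nil, by simp⟩, h2⟩
    have hdisj : Disjoint (Sne a e) {l : List (Fin n) | l = [] ∧ cnt l = e} := by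
      rw [Set.disjoint_left]
      rintro l ⟨⟨-, hne⟩, -⟩ ⟨rfl, -⟩
      exact hne rfl
    rw [hsplit, Set.ncard_union_eq hdisj (finite_cntSet _ e) (finite_cntSet _ e),
      ncard_eq_single]
    by_cases h : e = 0
    · rw [if_pos h, if_pos (show cnt ([] : List (Fin n)) = e by rw [cnt_nil, h])]
      push_cast; ring
    · rw [if_neg h, if_neg (show ¬ cnt ([] : List (Fin n)) = e by
        rw [cnt_nil]; exact fun hh => h hh.symm)]
      push_cast; ring
  -- coefficient of X a * (Sa - 1)
  have hU : ∀ d : Fin n →₀ ℕ,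
      MvPowerSeries.coeff d (MvPowerSeries.X a * (Sa - 1)) = ((Bset a d).ncard : ℚ) := by
    intro d
    have hXmon : (MvPowerSeries.X a : MvPowerSeries (Fin n) ℚ) =
        MvPowerSeries.monomial (Finsupp.single a 1) 1 := rfl
    rw [hXmon, MvPowerSeries.coeff_monomial_mul]
    split_ifs with h
    · rw [one_mul, hSm1, Bset_ncard a d h]
    · rw [Bset_empty a d h]
      simp
  -- coefficient of 1 + Wa - X a
  have hT : ∀ d : Fin n →₀ ℕ,
      MvPowerSeries.coeff d (1 + Wa - MvPowerSeries.X a) = ((Aset a d).ncard : ℚ) := by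
    intro d
    rw [map_sub, map_add, MvPowerSeries.coeff_one, MvPowerSeries.coeff_X, hW' d]
    have hq := congrArg (Nat.cast : ℕ → ℚ) (WA_card a d)
    rw [cnt_nil, cnt_singleton] at hq
    by_cases h1 : d = 0
    · subst h1
      by_cases h2 : (0 : Fin n →₀ ℕ) = Finsupp.single a 1
      · exact absurd ((Finsupp.single_eq_zero).mp h2.symm) one_ne_zero
      · rw [if_pos rfl, if_neg h2]
        rw [if_pos rfl, if_neg (fun h => h2 h.symm)] at hq
        push_cast at hq
        linarith
    · by_cases h2 : d = Finsupp.single a 1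
      · subst h2
        rw [if_neg h1, if_pos rfl]
        rw [if_neg (fun h => h1 h.symm), if_pos rfl] at hq
        push_cast at hq
        linarith
      · rw [if_neg h1, if_neg h2]
        rw [if_neg (fun h => h1 h.symm), if_neg (fun h => h2 h.symm)] at hq
        push_cast at hq
        linarith
  -- the main identity, coefficientwise
  have hmain : (1 + Wa - MvPowerSeries.X a) =
      1 + (1 + Wa - MvPowerSeries.X a) * (MvPowerSeries.X a * (Sa - 1)) := by
    apply MvPowerSeries.ext
    intro d
    rw [map_add, hT d, MvPowerSeries.coeff_one, MvPowerSeries.coeff_mul]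
    rw [Finset.sum_congr rfl fun p _ => by rw [hT p.1, hU p.2]]
    exact Aset_ncard a d
  calc (1 + Wa - MvPowerSeries.X a) * (1 - MvPowerSeries.X a * (Sa - 1))
      = (1 + Wa - MvPowerSeries.X a) -
        (1 + Wa - MvPowerSeries.X a) * (MvPowerSeries.X a * (Sa - 1)) := by ring
    _ = (1 + (1 + Wa - MvPowerSeries.X a) * (MvPowerSeries.X a * (Sa - 1))) -
        (1 + Wa - MvPowerSeries.X a) * (MvPowerSeries.X a * (Sa - 1)) := by rw [← hmain]
    _ = 1 := by ring
end

section
/- Let n be a positive integer. Define C ∈ MvPowerSeries (Fin n) ℚ by: for every d : Fin n →₀ ℕ, the coefficient of C at d is the number of nonempty lists over Fin n in which any two consecutive entries are distinct, either the list has length 1 or its first entry differs from its last entry, and each letter j occurs exactly d j times. For each a ∈ Fin n, define S_a ∈ MvPowerSeries (Fin n) ℚ by: the coefficient of S_a at d is the number of lists over Fin n in which any two consecutive entries are distinct, no entry equals a, and each letter j occurs exactly d j times. Then C = Σ_{a ∈ Fin n} ( X_a − 1 + (1 − X_a * (S_a − 1))⁻¹ ), where the inverse is the multiplicative inverse in MvPowerSeries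 (Fin n) ℚ (which exists since 1 − X_a * (S_a − 1) has constant coefficient 1). -/
namespace CS
variable {n : ℕ}

def cnt (l : List (Fin n)) (d : Fin n →₀ ℕ) : Prop := ∀ j, l.count j = d j

noncomputable def contentOf (l : List (Fin n)) : Fin n →₀ ℕ :=
  Finsupp.equivFunOnFinite.symm (fun j => l.count j)

@[simp] lemma contentOf_apply (l : List (Fin n)) (j : Fin n) : contentOf l j = l.count j := rfl

lemma cnt_contentOf (l : List (Fin n)) : cnt l (contentOf l) := fun _ => rfl

lemma cnt_iff_eq {l : List (Fin n)} {d} : cnt l d ↔ contentOf l = d := by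
  constructor
  · intro h; ext j; simpa using (h j).symm ▸ rfl
  · rintro rfl; exact cnt_contentOf l

lemma length_of_cnt {l : List (Fin n)} {d} (h : cnt l d) : l.length = ∑ j, d j := by
  classical
  have : ∑ j, d j = ∑ j ∈ l.toFinset, l.count j := by
    rw [← Finset.sum_subset (Finset.subset_univ l.toFinset)]
    · exact Finset.sum_congr rfl fun j _ => (h j).symm
    · intro j _ hj
      rw [← h j]
      simpa [List.count_eq_zero] using fun hm => hj (List.mem_toFinset.2 hm)
  rw [this, List.sum_toFinset_count_eq_length]

instance finite_cnt (P : List (Fin n) → Prop) (d : Fin n →₀ ℕ) :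
    Finite {l : List (Fin n) // P l ∧ cnt l d} := by
  have : Finite {l : List (Fin n) // l.length = ∑ j, d j} := by
    have := List.finite_length_eq (Fin n) (∑ j, d j)
    exact this.to_subtype
  exact Finite.of_injective
    (fun x => (⟨x.1, length_of_cnt x.2.2⟩ : {l : List (Fin n) // l.length = ∑ j, d j}))
    (fun x y h => Subtype.ext (congrArg Subtype.val h : _))

lemma nat_card_sigma {ι : Type*} [Fintype ι] (f : ι → Type*) [∀ i, Finite (f i)] :
    Nat.card (Σ i, f i) = ∑ i, Nat.card (f i) := by
  letI : ∀ i, Fintype (f i) := fun i => Fintype.ofFinite _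
  simp [Nat.card_eq_fintype_card]

def IsGF (f : MvPowerSeries (Fin n) ℚ) (P : List (Fin n) → Prop) : Prop :=
  ∀ d, MvPowerSeries.coeff d f = (Nat.card {l : List (Fin n) // P l ∧ cnt l d} : ℚ)

end CS

namespace CS
variable {n : ℕ}

lemma isGF_mul {f g : MvPowerSeries (Fin n) ℚ} {P Q R : List (Fin n) → Prop}
    (hf : IsGF f P) (hg : IsGF g Q)
    (e : ({l : List (Fin n) // P l} × {l : List (Fin n) // Q l}) ≃ {l : List (Fin n) // R l})
    (he : ∀ x : {l : List (Fin n) // P l} × {l : List (Fin n) // Q l},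
      ((e x : {l : List (Fin n) // R l}) : List (Fin n)) = x.1.1 ++ x.2.1) :
    IsGF (f * g) R := by
  classical
  intro d
  rw [MvPowerSeries.coeff_mul]
  have E1 : {l : List (Fin n) // R l ∧ cnt l d} ≃
      {x : {l : List (Fin n) // P l} × {l : List (Fin n) // Q l} //
        cnt (x.1.1 ++ x.2.1) d} :=
    { toFun := fun z => ⟨e.symm ⟨z.1, z.2.1⟩, by
        have h := he (e.symm ⟨z.1, z.2.1⟩)
        rw [e.apply_symm_apply] at h
        rw [← h]; exact z.2.2⟩
      invFun := fun x => ⟨(e x.1).1, (e x.1).2, by rw [he]; exact x.2⟩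
      left_inv := fun z => Subtype.ext (by simp)
      right_inv := fun x => Subtype.ext (by simp) }
  set T := {x : {l : List (Fin n) // P l} × {l : List (Fin n) // Q l} //
        cnt (x.1.1 ++ x.2.1) d} with hT
  have φmem : ∀ x : T, (contentOf x.1.1.1, contentOf x.1.2.1) ∈ Finset.HasAntidiagonal.antidiagonal d := by
    intro x
    rw [Finset.HasAntidiagonal.mem_antidiagonal]
    ext j
    have := x.2 j
    simpa [List.count_append] using this
  set φ : T → (Finset.HasAntidiagonal.antidiagonal d : Finset ((Fin n →₀ ℕ) × (Fin n →₀ ℕ))) :=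
    fun x => ⟨(contentOf x.1.1.1, contentOf x.1.2.1), φmem x⟩ with hφ
  have Efib : ∀ p : (Finset.HasAntidiagonal.antidiagonal d : Finset ((Fin n →₀ ℕ) × (Fin n →₀ ℕ))),
      {x : T // φ x = p} ≃
        ({l : List (Fin n) // P l ∧ cnt l p.1.1} × {l : List (Fin n) // Q l ∧ cnt l p.1.2}) := by
    intro p
    refine
    { toFun := fun y => (⟨y.1.1.1.1, y.1.1.1.2, ?_⟩, ⟨y.1.1.2.1, y.1.1.2.2, ?_⟩)
      invFun := fun u => ⟨⟨⟨⟨u.1.1, u.1.2.1⟩, ⟨u.2.1, u.2.2.1⟩⟩, ?_⟩, ?_⟩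
      left_inv := fun y => ?_
      right_inv := fun u => ?_ }
    · have hy := Subtype.ext_iff.1 y.2
      exact cnt_iff_eq.2 (congrArg Prod.fst hy)
    · have hy := Subtype.ext_iff.1 y.2
      exact cnt_iff_eq.2 (congrArg Prod.snd hy)
    · intro j
      have h1 := u.1.2.2 j
      have h2 := u.2.2.2 j
      have hp := Finset.HasAntidiagonal.mem_antidiagonal.1 p.2
      have := congrArg (fun q => q j) hp
      simp only [Finsupp.coe_add, Pi.add_apply] at this
      simp [List.count_append, h1, h2, this]
    · apply Subtype.ext
      exact Prod.ext (cnt_iff_eq.1 u.1.2.2) (cnt_iff_eq.1 u.2.2.2)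
    · apply Subtype.ext
      apply Subtype.ext
      exact Prod.ext (Subtype.ext rfl) (Subtype.ext rfl)
    · exact Prod.ext (Subtype.ext rfl) (Subtype.ext rfl)
  haveI : ∀ p, Finite {x : T // φ x = p} := fun p => Finite.of_equiv _ (Efib p).symm
  have key : Nat.card {l : List (Fin n) // R l ∧ cnt l d} =
      ∑ p ∈ Finset.HasAntidiagonal.antidiagonal d,
        Nat.card {l : List (Fin n) // P l ∧ cnt l p.1} *
          Nat.card {l : List (Fin n) // Q l ∧ cnt l p.2} := by
    rw [Nat.card_congr (E1.trans (Equiv.sigmaFiberEquiv φ).symm), nat_card_sigma]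
    rw [← Finset.sum_coe_sort (Finset.HasAntidiagonal.antidiagonal d)
      (fun p => Nat.card {l : List (Fin n) // P l ∧ cnt l p.1} *
        Nat.card {l : List (Fin n) // Q l ∧ cnt l p.2})]
    exact Finset.sum_congr rfl fun p _ => by
      rw [Nat.card_congr (Efib p), Nat.card_prod]
  rw [key, Nat.cast_sum]
  exact Finset.sum_congr rfl fun p _ => by rw [hf, hg, Nat.cast_mul]

end CS

namespace CS
variable {n : ℕ}

def P1 (a : Fin n) (l : List (Fin n)) : Prop := l = [a]
def PW (a : Fin n) (l : List (Fin n)) : Prop :=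
  l ≠ [] ∧ l.Chain' (· ≠ ·) ∧ ∀ x ∈ l, x ≠ a
def PT (a : Fin n) (l : List (Fin n)) : Prop :=
  l.Chain' (· ≠ ·) ∧ l.head? = some a ∧ l.getLast? ≠ some a
def P0T (a : Fin n) (l : List (Fin n)) : Prop := l = [] ∨ PT a l
def Ra (a : Fin n) (l : List (Fin n)) : Prop :=
  l ≠ [] ∧ l.Chain' (· ≠ ·) ∧ l.head? ≠ some a ∧ l.getLast? ≠ some a
def PC (l : List (Fin n)) : Prop :=
  l ≠ [] ∧ l.Chain' (· ≠ ·) ∧ (l.length = 1 ∨ l.head? ≠ l.getLast?)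

lemma card_congr_pred {P Q : List (Fin n) → Prop} (h : ∀ l, P l ↔ Q l) (d : Fin n →₀ ℕ) :
    Nat.card {l : List (Fin n) // P l ∧ cnt l d} = Nat.card {l : List (Fin n) // Q l ∧ cnt l d} :=
  Nat.card_congr (Equiv.subtypeEquivRight fun l => and_congr_left' (h l))

lemma card_or_split {P Q : List (Fin n) → Prop} (hd : ∀ l, P l → Q l → False) (d : Fin n →₀ ℕ) :
    Nat.card {l : List (Fin n) // (P l ∨ Q l) ∧ cnt l d} =
      Nat.card {l : List (Fin n) // P l ∧ cnt l d} +
        Nat.card {l : List (Fin n) // Q l ∧ cnt l d} := by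
  classical
  rw [Nat.card_congr (Equiv.subtypeEquivRight (q := fun l => (P l ∧ cnt l d) ∨ (Q l ∧ cnt l d))
    fun l => by tauto)]
  have hdisj : Disjoint (fun l => P l ∧ cnt l d) (fun l => Q l ∧ cnt l d) := by
    rw [Pi.disjoint_iff]
    intro l
    rw [disjoint_iff_inf_le]
    rintro ⟨⟨h1, -⟩, ⟨h2, -⟩⟩
    exact (hd l h1 h2).elim
  rw [Nat.card_congr (subtypeOrEquiv _ _ hdisj)]
  exact Nat.card_sum

lemma cnt_nil_iff {d : Fin n →₀ ℕ} : cnt ([] : List (Fin n)) d ↔ d = 0 := by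
  constructor
  · intro h; ext j; simpa using (h j).symm
  · rintro rfl j; simp

lemma count_single (a j : Fin n) : List.count j [a] = Finsupp.single a 1 j := by
  rw [Finsupp.single_apply, List.count_singleton]
  simp [beq_iff_eq]

lemma cnt_single_iff {a : Fin n} {d : Fin n →₀ ℕ} :
    cnt [a] d ↔ d = Finsupp.single a 1 := by
  constructor
  · intro h; ext j; rw [← h j, count_single]
  · rintro rfl j; rw [count_single]

lemma card_single_pos {l₀ : List (Fin n)} {d : Fin n →₀ ℕ} (h : cnt l₀ d) :
    Nat.card {l : List (Fin n) // l = l₀ ∧ cnt l d} = 1 := by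
  rw [Nat.card_eq_one_iff_unique]
  exact ⟨⟨fun x y => Subtype.ext (x.2.1.trans y.2.1.symm)⟩, ⟨⟨l₀, rfl, h⟩⟩⟩

lemma card_single_neg {l₀ : List (Fin n)} {d : Fin n →₀ ℕ} (h : ¬ cnt l₀ d) :
    Nat.card {l : List (Fin n) // l = l₀ ∧ cnt l d} = 0 := by
  rw [Nat.card_eq_zero]
  left
  exact ⟨fun x => h (x.2.1 ▸ x.2.2)⟩

lemma gf_one : IsGF (1 : MvPowerSeries (Fin n) ℚ) (fun l => l = []) := by
  intro d
  rw [MvPowerSeries.coeff_one]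
  by_cases h : d = 0
  · rw [if_pos h, card_single_pos (cnt_nil_iff.2 h)]; norm_num
  · rw [if_neg h, card_single_neg (fun hc => h (cnt_nil_iff.1 hc))]; norm_num

lemma gf_X (a : Fin n) : IsGF (MvPowerSeries.X a : MvPowerSeries (Fin n) ℚ) (P1 a) := by
  intro d
  rw [MvPowerSeries.coeff_X]
  by_cases h : d = Finsupp.single a 1
  · rw [if_pos h, show (Nat.card {l : List (Fin n) // P1 a l ∧ cnt l d}) =
      Nat.card {l : List (Fin n) // l = [a] ∧ cnt l d} from rfl,
      card_single_pos (cnt_single_iff.2 h)]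
    norm_num
  · rw [if_neg h, show (Nat.card {l : List (Fin n) // P1 a l ∧ cnt l d}) =
      Nat.card {l : List (Fin n) // l = [a] ∧ cnt l d} from rfl,
      card_single_neg (fun hc => h (cnt_single_iff.1 hc))]
    norm_num

end CS

namespace CS
variable {n : ℕ}

lemma cons_PT {a : Fin n} {r : List (Fin n)} (hr : Ra a r) : PT a ([a] ++ r) := by
  obtain ⟨hne, hch, hh, hl⟩ := hr
  refine ⟨?_, rfl, ?_⟩
  · rw [List.singleton_append]
    refine hch.cons ?_
    intro y hy hay
    exact hh (by rw [← hay] at hy; exact hy)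
  · rw [List.getLast?_append_of_ne_nil _ hne]
    exact hl

lemma PT_decomp {a : Fin n} {l : List (Fin n)} (h : PT a l) :
    Ra a l.tail ∧ [a] ++ l.tail = l := by
  obtain ⟨hch, hh, hl⟩ := h
  cases l with
  | nil => simp at hh
  | cons x t =>
    have hx : x = a := by simpa using hh
    subst hx
    have htne : t ≠ [] := by
      rintro rfl
      exact hl (by simp)
    refine ⟨⟨htne, hch.tail, ?_, ?_⟩, rfl⟩
    · intro hc
      exact (hch.rel_head? hc) rfl
    · show t.getLast? ≠ _
      intro hc
      apply hl
      rw [show (x :: t) = [x] ++ t from rfl, List.getLast?_append_of_ne_nil _ htne]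
      exact hc

def eCons (a : Fin n) :
    ({l : List (Fin n) // P1 a l} × {l : List (Fin n) // Ra a l}) ≃ {l : List (Fin n) // PT a l} where
  toFun x := ⟨x.1.1 ++ x.2.1, by rw [show x.1.1 = [a] from x.1.2]; exact cons_PT x.2.2⟩
  invFun t := ⟨⟨[a], rfl⟩, ⟨t.1.tail, (PT_decomp t.2).1⟩⟩
  left_inv x := by
    apply Prod.ext
    · exact Subtype.ext x.1.2.symm
    · apply Subtype.ext
      show (x.1.1 ++ x.2.1).tail = x.2.1
      rw [show x.1.1 = [a] from x.1.2]
      rfl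
  right_inv t := Subtype.ext (PT_decomp t.2).2

end CS

namespace CS
variable {n : ℕ}

lemma append_Ra {a : Fin n} {w r : List (Fin n)} (hw : PW a w) (hr : P0T a r) :
    Ra a (w ++ r) := by
  obtain ⟨hwne, hwch, hwa⟩ := hw
  have hwh : w.head? ≠ some a := fun hc => hwa _ (List.mem_of_mem_head? hc) rfl
  have hwl : w.getLast? ≠ some a := fun hc => hwa _ (List.mem_of_mem_getLast? hc) rfl
  rcases hr with rfl | ⟨hrch, hrh, hrl⟩
  · rw [List.append_nil]
    exact ⟨hwne, hwch, hwh, hwl⟩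
  · have hrne : r ≠ [] := by rintro rfl; simp at hrh
    refine ⟨by simp [hwne], ?_, ?_, ?_⟩
    · refine hwch.append hrch ?_
      intro x hx y hy
      have hxa : x ≠ a := hwa _ (List.mem_of_mem_getLast? hx)
      have hya : y = a := by rw [hrh] at hy; exact (Option.some_injective _ (Option.mem_def.1 hy)).symm
      rw [hya]; exact hxa
    · rw [List.head?_append_of_ne_nil _ hwne]; exact hwh
    · rw [List.getLast?_append_of_ne_nil _ hrne]; exact hrl

lemma Ra_decomp {a : Fin n} {l : List (Fin n)} (h : Ra a l) :
    PW a (l.takeWhile (· != a)) ∧ P0T a (l.dropWhile (· != a)) ∧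
      l.takeWhile (· != a) ++ l.dropWhile (· != a) = l := by
  obtain ⟨hne, hch, hh, hl⟩ := h
  refine ⟨⟨?_, hch.prefix (List.takeWhile_prefix _), ?_⟩, ?_, List.takeWhile_append_dropWhile⟩
  · cases l with
    | nil => exact absurd rfl hne
    | cons x t =>
      have hx : x ≠ a := fun hc => hh (by rw [hc]; rfl)
      rw [List.takeWhile_cons_of_pos (by simpa using hx)]
      simp
  · intro x hx
    simpa using List.mem_takeWhile_imp hx
  · by_cases hD : l.dropWhile (· != a) = []
    · exact Or.inl hD
    · refine Or.inr ⟨hch.suffix (List.dropWhile_suffix _), ?_, ?_⟩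
      · rw [List.head?_eq_head hD]
        have := List.head_dropWhile_not (· != a) hD
        simp only [bne_eq_false_iff_eq] at this
        rw [this]
      · rw [← List.takeWhile_append_dropWhile (p := (· != a)) (l := l)] at hl
        rw [List.getLast?_append_of_ne_nil _ hD] at hl
        exact hl

lemma split_unique {a : Fin n} {w r : List (Fin n)} (hw : PW a w) (hr : P0T a r) :
    (w ++ r).takeWhile (· != a) = w ∧ (w ++ r).dropWhile (· != a) = r := by
  have hwpos : ∀ x ∈ w, (x != a) = true := fun x hx => by simpa using hw.2.2 x hx
  have htr : r.takeWhile (· != a) = [] ∧ r.dropWhile (· != a) = r := by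
    rcases hr with rfl | ⟨-, hrh, -⟩
    · exact ⟨rfl, rfl⟩
    · cases r with
      | nil => exact ⟨rfl, rfl⟩
      | cons y s =>
        have hy : y = a := by simpa using hrh
        subst hy
        constructor
        · rw [List.takeWhile_cons_of_neg (by simp)]
        · rw [List.dropWhile_cons_of_neg (by simp)]
  constructor
  · rw [List.takeWhile_append_of_pos hwpos, htr.1, List.append_nil]
  · rw [List.dropWhile_append_of_pos hwpos, htr.2]

def eApp (a : Fin n) :
    ({l : List (Fin n) // PW a l} × {l : List (Fin n) // P0T a l}) ≃
      {l : List (Fin n) // Ra a l} where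
  toFun x := ⟨x.1.1 ++ x.2.1, append_Ra x.1.2 x.2.2⟩
  invFun t := ⟨⟨t.1.takeWhile (· != a), (Ra_decomp t.2).1⟩,
    ⟨t.1.dropWhile (· != a), (Ra_decomp t.2).2.1⟩⟩
  left_inv x := by
    apply Prod.ext
    · exact Subtype.ext (split_unique x.1.2 x.2.2).1
    · exact Subtype.ext (split_unique x.1.2 x.2.2).2
  right_inv t := Subtype.ext (Ra_decomp t.2).2.2

end CS

namespace CS
variable {n : ℕ}

lemma isGF_or {f g : MvPowerSeries (Fin n) ℚ} {P Q : List (Fin n) → Prop}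
    (hf : IsGF f P) (hg : IsGF g Q) (hd : ∀ l, P l → Q l → False) :
    IsGF (f + g) (fun l => P l ∨ Q l) := by
  intro d
  rw [map_add, hf, hg, card_or_split hd d]
  push_cast
  ring

lemma PC_or {l : List (Fin n)} (h : PC l) {a : Fin n} (hh : l.head? = some a) :
    P1 a l ∨ PT a l := by
  rcases eq_or_ne l.length 1 with h1 | h1
  · left
    obtain ⟨x, rfl⟩ := List.length_eq_one_iff.1 h1
    have : x = a := by simpa using hh
    rw [this]; rfl
  · right
    refine ⟨h.2.1, hh, ?_⟩
    rcases h.2.2 with h2 | h2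
    · exact absurd h2 h1
    · intro hc; exact h2 (by rw [hh, hc])

lemma or_PC {a : Fin n} {l : List (Fin n)} (h : P1 a l ∨ PT a l) :
    PC l ∧ l.head? = some a := by
  rcases h with h | ⟨hch, hh, hl⟩
  · rw [show l = [a] from h]
    exact ⟨⟨by simp, List.isChain_singleton _, Or.inl rfl⟩, rfl⟩
  · have hne : l ≠ [] := by rintro rfl; simp at hh
    exact ⟨⟨hne, hch, Or.inr (by rw [hh]; exact fun hc => hl hc.symm)⟩, hh⟩

lemma P1_PT_disj (a : Fin n) (l : List (Fin n)) : P1 a l → PT a l → False := by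
  intro h1 h2
  rw [show l = [a] from h1] at h2
  exact h2.2.2 (by simp)

lemma card_PC (d : Fin n →₀ ℕ) :
    Nat.card {l : List (Fin n) // PC l ∧ cnt l d} =
      ∑ a : Fin n, (Nat.card {l : List (Fin n) // P1 a l ∧ cnt l d} +
        Nat.card {l : List (Fin n) // PT a l ∧ cnt l d}) := by
  classical
  set U := {l : List (Fin n) // PC l ∧ cnt l d} with hU
  set ψ : U → Fin n := fun x => x.1.head x.2.1.1 with hψdef
  have hψ : ∀ x : U, x.1.head? = some (ψ x) := fun x => List.head?_eq_head _
  rw [Nat.card_congr (Equiv.sigmaFiberEquiv ψ).symm, nat_card_sigma]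
  refine Finset.sum_congr rfl fun a _ => ?_
  have E : {x : U // ψ x = a} ≃ {l : List (Fin n) // (P1 a l ∨ PT a l) ∧ cnt l d} :=
    { toFun := fun x => ⟨x.1.1, PC_or x.1.2.1 (by rw [hψ x.1, x.2]), x.1.2.2⟩
      invFun := fun u => ⟨⟨u.1, (or_PC u.2.1).1, u.2.2⟩, by
        have h1 := hψ ⟨u.1, (or_PC u.2.1).1, u.2.2⟩
        exact (Option.some_injective _ (((or_PC u.2.1).2).symm.trans h1)).symm⟩
      left_inv := fun x => Subtype.ext (Subtype.ext rfl)
      right_inv := fun u => Subtype.ext rfl }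
  rw [Nat.card_congr E, card_or_split (P1_PT_disj a) d]

end CS

open CS in
theorem circular_smirnov_gf (n : ℕ) (hn : 0 < n)
    (C : MvPowerSeries (Fin n) ℚ) (S : Fin n → MvPowerSeries (Fin n) ℚ)
    (hC : ∀ d : Fin n →₀ ℕ,
      MvPowerSeries.coeff d C =
        (Nat.card {l : List (Fin n) //
          l ≠ [] ∧ l.Chain' (· ≠ ·) ∧
          (l.length = 1 ∨ l.head? ≠ l.getLast?) ∧
          ∀ j : Fin n, l.count j = d j} : ℚ))
    (hS : ∀ (a : Fin n) (d : Fin n →₀ ℕ),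
      MvPowerSeries.coeff d (S a) =
        (Nat.card {l : List (Fin n) //
          l.Chain' (· ≠ ·) ∧ (∀ x ∈ l, x ≠ a) ∧
          ∀ j : Fin n, l.count j = d j} : ℚ)) :
    C = ∑ a : Fin n,
      (MvPowerSeries.X a - 1 + (1 - MvPowerSeries.X a * (S a - 1))⁻¹) := by
  classical
  set T : Fin n → MvPowerSeries (Fin n) ℚ :=
    fun a d => (Nat.card {l : List (Fin n) // PT a l ∧ cnt l d} : ℚ) with hTdef
  have hT : ∀ a, IsGF (T a) (PT a) := fun a d => rfl
  have hST : ∀ a, IsGF (S a - 1) (PW a) := by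
    intro a d
    have h1 : MvPowerSeries.coeff d (S a) =
        ((Nat.card {l : List (Fin n) // (l = [] ∨ PW a l) ∧ cnt l d} : ℕ) : ℚ) := by
      rw [hS a d]
      norm_cast
      apply Nat.card_congr
      apply Equiv.subtypeEquivRight
      intro l
      constructor
      · rintro ⟨hch, hfree, hcnt⟩
        refine ⟨?_, hcnt⟩
        rcases eq_or_ne l [] with rfl | hne
        · exact Or.inl rfl
        · exact Or.inr ⟨hne, hch, hfree⟩
      · rintro ⟨h, hcnt⟩
        rcases h with rfl | ⟨-, hch, hfree⟩
        · exact ⟨List.isChain_nil, by simp, hcnt⟩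
        · exact ⟨hch, hfree, hcnt⟩
    rw [map_sub, h1, card_or_split (fun l h1 h2 => h2.1 h1) d, gf_one d]
    push_cast
    ring
  have h0T : ∀ a, IsGF (1 + T a) (P0T a) := by
    intro a
    exact isGF_or gf_one (hT a)
      (fun l h1 h2 => by rw [h1] at h2; exact absurd h2.2.1 (by simp))
  have hRa : ∀ a, IsGF ((S a - 1) * (1 + T a)) (Ra a) :=
    fun a => isGF_mul (hST a) (h0T a) (eApp a) (fun _ => rfl)
  have hPT2 : ∀ a, IsGF (MvPowerSeries.X a * ((S a - 1) * (1 + T a))) (PT a) :=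
    fun a => isGF_mul (gf_X a) (hRa a) (eCons a) (fun _ => rfl)
  have hTeq : ∀ a, T a = MvPowerSeries.X a * ((S a - 1) * (1 + T a)) := by
    intro a
    apply MvPowerSeries.ext
    intro d
    rw [hT a d, hPT2 a d]
  have hCd : C = ∑ a : Fin n, (MvPowerSeries.X a + T a) := by
    apply MvPowerSeries.ext
    intro d
    rw [hC d, map_sum]
    have hL : (Nat.card {l : List (Fin n) //
        l ≠ [] ∧ l.Chain' (· ≠ ·) ∧
        (l.length = 1 ∨ l.head? ≠ l.getLast?) ∧
        ∀ j : Fin n, l.count j = d j} : ℚ) =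
        (Nat.card {l : List (Fin n) // PC l ∧ cnt l d} : ℚ) := by
      norm_cast
      apply Nat.card_congr
      apply Equiv.subtypeEquivRight
      intro l
      exact ⟨fun ⟨h1, h2, h3, h4⟩ => ⟨⟨h1, h2, h3⟩, h4⟩,
        fun ⟨⟨h1, h2, h3⟩, h4⟩ => ⟨h1, h2, h3, h4⟩⟩
    rw [hL, card_PC d]
    push_cast
    refine Finset.sum_congr rfl fun a _ => ?_
    rw [map_add, gf_X a, hT a]
  have huinv : ∀ a, (1 - MvPowerSeries.X a * (S a - 1)) *
      (1 - MvPowerSeries.X a * (S a - 1))⁻¹ = 1 := by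
    intro a
    apply MvPowerSeries.mul_inv_cancel
    rw [map_sub, map_one, map_mul, MvPowerSeries.constantCoeff_X, zero_mul, sub_zero]
    exact one_ne_zero
  have hTalg : ∀ a, T a = (1 - MvPowerSeries.X a * (S a - 1))⁻¹ - 1 := by
    intro a
    have h2 : T a * (1 - MvPowerSeries.X a * (S a - 1)) = MvPowerSeries.X a * (S a - 1) := by
      linear_combination hTeq a
    have h3 : (1 - MvPowerSeries.X a * (S a - 1))⁻¹ - 1 =
        (1 - MvPowerSeries.X a * (S a - 1))⁻¹ * (MvPowerSeries.X a * (S a - 1)) := by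
      linear_combination huinv a
    rw [h3]
    calc T a = (1 - MvPowerSeries.X a * (S a - 1))⁻¹ *
        (T a * (1 - MvPowerSeries.X a * (S a - 1))) := by
          linear_combination (-(T a)) * huinv a
      _ = _ := by rw [h2]
  rw [hCd]
  refine Finset.sum_congr rfl fun a _ => ?_
  rw [hTalg a]
  ring
end

section
/- Let n be a positive integer. Define S ∈ MvPowerSeries (Fin n) ℚ by: for every d : Fin n →₀ ℕ, the coefficient of S at d is the number of lists over Fin n in which any two consecutive entries are distinct and each letter j occurs exactly d j times (in particular the constant coefficient is 1, counting the empty list). Then S * (1 − Σ_{j ∈ Fin n} X_j * (1 + X_j)⁻¹) = 1 in MvPowerSeries (Fin n) ℚ, where for each j the inverse (1 + X_j)⁻¹ is the multiplicative inverse in MvPowerSeries (Fin n) ℚ (which exists since 1 + X_j has constant coefficient 1). -/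
open Finset

namespace SmAux

variable {n : ℕ}

noncomputable def N (n : ℕ) (d : Fin n →₀ ℕ) : ℕ :=
  Nat.card {l : List (Fin n) // l.Chain' (· ≠ ·) ∧ ∀ j : Fin n, l.count j = d j}

noncomputable def A (n : ℕ) (j : Fin n) (d : Fin n →₀ ℕ) : ℕ :=
  Nat.card {l : List (Fin n) //
    (l.Chain' (· ≠ ·) ∧ ∀ i : Fin n, l.count i = d i) ∧ l.getLast? = some j}

lemma length_eq (l : List (Fin n)) : l.length = ∑ j, l.count j := by
  have := Multiset.sum_count_eq_card (s := (Finset.univ : Finset (Fin n)))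
    (m := (l : Multiset (Fin n))) (fun a _ => Finset.mem_univ a)
  simpa using this.symm

lemma finite_of_counts (p : List (Fin n) → Prop) (d : Fin n →₀ ℕ)
    (h : ∀ l, p l → ∀ j, l.count j = d j) : Finite {l : List (Fin n) // p l} := by
  have hsub : {l : List (Fin n) | p l} ⊆ {l | l.length = ∑ j, d j} := fun l hl => by
    simp only [Set.mem_setOf_eq, length_eq l]
    exact Finset.sum_congr rfl fun j _ => h l hl j
  exact ((List.finite_length_eq _ _).subset hsub).to_subtype

instance (d : Fin n →₀ ℕ) :
    Finite {l : List (Fin n) // l.Chain' (· ≠ ·) ∧ ∀ j : Fin n, l.count j = d j} :=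
  finite_of_counts _ d fun _ hl => hl.2

instance (d : Fin n →₀ ℕ) (j : Fin n) :
    Finite {l : List (Fin n) //
      (l.Chain' (· ≠ ·) ∧ ∀ i : Fin n, l.count i = d i) ∧ l.getLast? = some j} :=
  finite_of_counts _ d fun _ hl => hl.1.2

lemma nat_card_sigma {ι : Type*} [Fintype ι] (f : ι → Type*) [∀ i, Finite (f i)] :
    Nat.card ((i : ι) × f i) = ∑ i, Nat.card (f i) := by
  letI : ∀ i, Fintype (f i) := fun i => Fintype.ofFinite _
  simp [Nat.card_eq_fintype_card, Fintype.card_sigma]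

lemma card_split {α : Type*} (p q : α → Prop) [hf : Finite {x // p x}] :
    Nat.card {x // p x ∧ q x} + Nat.card {x // p x ∧ ¬ q x} = Nat.card {x // p x} := by
  classical
  haveI : Finite {x // p x ∧ q x} :=
    Finite.of_injective (fun y => (⟨y.1, y.2.1⟩ : {x // p x}))
      (fun a b h => Subtype.ext (by simpa using congrArg Subtype.val h))
  haveI : Finite {x // p x ∧ ¬ q x} :=
    Finite.of_injective (fun y => (⟨y.1, y.2.1⟩ : {x // p x}))
      (fun a b h => Subtype.ext (by simpa using congrArg Subtype.val h))
  have e : {x // p x} ≃ {x // p x ∧ q x} ⊕ {x // p x ∧ ¬ q x} :=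
    (Equiv.sumCompl (fun y : {x // p x} => q y.1)).symm.trans
      (Equiv.sumCongr
        ((Equiv.subtypeSubtypeEquivSubtypeInter p q))
        ((Equiv.subtypeSubtypeEquivSubtypeInter p (fun x => ¬ q x))))
  rw [Nat.card_congr e, Nat.card_sum]

lemma N_zero : N n 0 = 1 := by
  rw [N, Nat.card_eq_one_iff_unique]
  constructor
  · constructor
    rintro ⟨l, _, hl⟩ ⟨m, _, hm⟩
    have h1 : l = [] := by
      rw [List.eq_nil_iff_forall_not_mem]
      intro a ha
      exact (List.count_pos_iff.mpr ha).ne' (by simpa using hl a)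
    have h2 : m = [] := by
      rw [List.eq_nil_iff_forall_not_mem]
      intro a ha
      exact (List.count_pos_iff.mpr ha).ne' (by simpa using hm a)
    simp [h1, h2]
  · exact ⟨⟨[], List.isChain_nil, by simp⟩⟩

lemma N_split (d : Fin n →₀ ℕ) (hd : d ≠ 0) : N n d = ∑ j, A n j d := by
  have hne : ∀ (l : List (Fin n)), (∀ i : Fin n, l.count i = d i) → l ≠ [] := by
    intro l hl hnil
    apply hd
    ext i
    simpa [hnil] using (hl i).symm
  rw [N]; simp only [A]; rw [← nat_card_sigma]
  apply Nat.card_congr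
  refine
    { toFun := fun x => ⟨x.1.getLast (hne x.1 x.2.2),
        ⟨x.1, x.2, List.getLast?_eq_getLast_of_ne_nil _⟩⟩
      invFun := fun y => ⟨y.2.1, y.2.2.1⟩
      left_inv := fun x => rfl
      right_inv := ?_ }
  rintro ⟨j, l, hl, hlast⟩
  have hj : l.getLast (hne l hl.2) = j := by
    rw [List.getLast?_eq_getLast_of_ne_nil (hne l hl.2)] at hlast
    exact Option.some_injective _ hlast
  subst hj
  rfl

lemma A_equiv (d : Fin n →₀ ℕ) (j : Fin n) (hdj : d j ≠ 0) :
    A n j d = Nat.card {l : List (Fin n) //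
      (l.Chain' (· ≠ ·) ∧ ∀ i : Fin n, l.count i = (d - Finsupp.single j 1 : Fin n →₀ ℕ) i) ∧
        l.getLast? ≠ some j} := by
  apply Nat.card_congr
  refine
    { toFun := fun x => ⟨x.1.dropLast, ?_⟩
      invFun := fun y => ⟨y.1 ++ [j], ?_⟩
      left_inv := ?_
      right_inv := ?_ }
  · obtain ⟨l, ⟨hc, hcount⟩, hlast⟩ := x
    dsimp only
    have hl : l.dropLast ++ [j] = l :=
      List.dropLast_append_getLast? j (Option.mem_def.mpr hlast)
    rw [← hl] at hc
    obtain ⟨hc1, _, hc3⟩ := List.isChain_append.mp hc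
    refine ⟨⟨hc1, ?_⟩, ?_⟩
    · intro i
      rcases eq_or_ne i j with rfl | hij
      · have h1 : l.count i = l.dropLast.count i + 1 := by
          conv_lhs => rw [← hl]
          simp [List.count_append]
        have h2 := hcount i
        rw [Finsupp.tsub_apply, Finsupp.single_apply, if_pos rfl]
        omega
      · have h1 : l.count i = l.dropLast.count i := by
          conv_lhs => rw [← hl]
          simp [List.count_append, hij, Ne.symm hij]
        have h2 := hcount i
        rw [Finsupp.tsub_apply, Finsupp.single_apply, if_neg (Ne.symm hij)]
        omega
    · intro hbad
      exact hc3 j (Option.mem_def.mpr hbad) j (by simp) rfl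
  · obtain ⟨m, ⟨hc, hcount⟩, hlast⟩ := y
    dsimp only
    refine ⟨⟨List.isChain_append.mpr ⟨hc, List.isChain_singleton j, ?_⟩, ?_⟩, ?_⟩
    · intro x hx y hy
      simp only [List.head?_cons, Option.mem_def, Option.some.injEq] at hy
      subst hy
      intro hxy
      subst hxy
      exact hlast (Option.mem_def.mp hx)
    · intro i
      rcases eq_or_ne i j with rfl | hij
      · have h2 := hcount i
        rw [Finsupp.tsub_apply, Finsupp.single_apply, if_pos rfl] at h2
        have h1 : (m ++ [i]).count i = m.count i + 1 := by
          simp [List.count_append]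
        omega
      · have h2 := hcount i
        rw [Finsupp.tsub_apply, Finsupp.single_apply, if_neg (Ne.symm hij)] at h2
        have h1 : (m ++ [j]).count i = m.count i := by
          simp [List.count_append, hij, Ne.symm hij]
        omega
    · exact List.getLast?_concat
  · rintro ⟨l, ⟨hc, hcount⟩, hlast⟩
    exact Subtype.ext (List.dropLast_append_getLast? j (Option.mem_def.mpr hlast))
  · rintro ⟨m, hm⟩
    exact Subtype.ext (List.dropLast_concat)

lemma A_zero (d : Fin n →₀ ℕ) (j : Fin n) (hdj : d j = 0) : A n j d = 0 := by
  rw [A, Nat.card_eq_zero]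
  left
  constructor
  rintro ⟨l, ⟨hc, hcount⟩, hlast⟩
  obtain ⟨hne, rfl⟩ := List.mem_getLast?_eq_getLast (Option.mem_def.mpr hlast)
  have : l.count (l.getLast hne) ≠ 0 := by
    simp [List.count_eq_zero, List.getLast_mem hne]
  rw [hcount] at this
  exact this hdj

lemma A_rec (d : Fin n →₀ ℕ) (j : Fin n) (hdj : d j ≠ 0) :
    A n j d + A n j (d - Finsupp.single j 1) = N n (d - Finsupp.single j 1) := by
  haveI : Finite {l : List (Fin n) //
      l.Chain' (· ≠ ·) ∧ ∀ i : Fin n, l.count i = (d - Finsupp.single j 1 : Fin n →₀ ℕ) i} :=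
    finite_of_counts _ _ fun _ hl => hl.2
  have := card_split
    (fun l : List (Fin n) =>
      l.Chain' (· ≠ ·) ∧ ∀ i : Fin n, l.count i = (d - Finsupp.single j 1 : Fin n →₀ ℕ) i)
    (fun l => l.getLast? = some j)
  rw [A_equiv d j hdj, A, N, add_comm]
  convert this using 3

lemma sub_sub_single (d : Fin n →₀ ℕ) (j : Fin n) (k : ℕ) :
    d - Finsupp.single j 1 - Finsupp.single j k = d - Finsupp.single j (k + 1) := by
  rw [tsub_tsub, ← Finsupp.single_add, add_comm]

lemma Aq (j : Fin n) : ∀ (m : ℕ) (d : Fin n →₀ ℕ), d j = m →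
    (A n j d : ℚ) =
      ∑ k ∈ Finset.range m, (-1 : ℚ) ^ k * (N n (d - Finsupp.single j (k + 1)) : ℚ) := by
  intro m
  induction m with
  | zero => intro d hd; simp [A_zero d j hd]
  | succ m ih =>
    intro d hd
    have hdj : d j ≠ 0 := by omega
    have hd' : (d - Finsupp.single j 1 : Fin n →₀ ℕ) j = m := by
      rw [Finsupp.tsub_apply, Finsupp.single_apply, if_pos rfl]; omega
    have hrec := A_rec d j hdj
    have : (A n j d : ℚ) = N n (d - Finsupp.single j 1) - A n j (d - Finsupp.single j 1) := by
      push_cast [← hrec]; ring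
    rw [this, ih _ hd', eq_comm, Finset.sum_range_succ']
    have hptw : ∀ k ∈ Finset.range m,
        (-1 : ℚ) ^ (k + 1) * (N n (d - Finsupp.single j (k + 1 + 1)) : ℚ)
        = -((-1 : ℚ) ^ k *
            (N n ((d - Finsupp.single j 1 : Fin n →₀ ℕ) - Finsupp.single j (k + 1)) : ℚ)) := by
      intro k _
      rw [sub_sub_single]
      ring
    rw [Finset.sum_congr rfl hptw, Finset.sum_neg_distrib]
    simp only [pow_zero, one_mul, zero_add]
    ring

lemma key (d : Fin n →₀ ℕ) :
    (N n d : ℚ) = (if d = 0 then 1 else 0) +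
      ∑ j, ∑ k ∈ Finset.range (d j), (-1 : ℚ) ^ k * (N n (d - Finsupp.single j (k + 1)) : ℚ) := by
  rcases eq_or_ne d 0 with rfl | hd
  · simp [N_zero]
  · rw [if_neg hd, N_split d hd, zero_add, Nat.cast_sum]
    exact Finset.sum_congr rfl fun j _ => Aq j (d j) d rfl

noncomputable def B (n : ℕ) (j : Fin n) : MvPowerSeries (Fin n) ℚ :=
  fun b => if b = Finsupp.single j (b j) then (-1 : ℚ) ^ (b j) else 0

lemma coeff_B (j : Fin n) (b : Fin n →₀ ℕ) :
    MvPowerSeries.coeff b (B n j) =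
      if b = Finsupp.single j (b j) then (-1 : ℚ) ^ (b j) else 0 :=
  rfl

lemma single_sub_single (j : Fin n) (k : ℕ) :
    (Finsupp.single j k - Finsupp.single j 1 : Fin n →₀ ℕ) = Finsupp.single j (k - 1) := by
  ext i
  rw [Finsupp.tsub_apply]
  rcases eq_or_ne j i with rfl | hij
  · simp
  · simp [Finsupp.single_apply, hij]

lemma B_mul (j : Fin n) : B n j * (1 + MvPowerSeries.X j) = 1 := by
  classical
  apply MvPowerSeries.ext
  intro d
  rw [mul_add, mul_one, map_add, MvPowerSeries.coeff_one]
  rw [MvPowerSeries.X, MvPowerSeries.coeff_mul_monomial, coeff_B]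
  rcases eq_or_ne d 0 with rfl | hd0
  · have hle : ¬ (Finsupp.single j 1 ≤ (0 : Fin n →₀ ℕ)) := by
      simp [Finsupp.single_le_iff]
    rw [if_neg hle, if_pos (by simp), if_pos rfl]
    simp
  · rw [if_neg hd0]
    rcases eq_or_ne d (Finsupp.single j (d j)) with hd | hd
    · have hdj : d j ≠ 0 := by
        intro h
        apply hd0
        rw [hd, h, Finsupp.single_zero]
      have hle : Finsupp.single j 1 ≤ d := by
        rw [Finsupp.single_le_iff]; omega
      rw [if_pos hd, if_pos hle, coeff_B]
      have hsub : (d - Finsupp.single j 1 : Fin n →₀ ℕ) = Finsupp.single j (d j - 1) := by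
        conv_lhs => rw [hd]
        exact single_sub_single j (d j)
      have hsubj : (d - Finsupp.single j 1 : Fin n →₀ ℕ) j = d j - 1 := by
        rw [hsub, Finsupp.single_eq_same]
      rw [if_pos (by rw [hsubj, hsub]), hsubj]
      obtain ⟨m, hm⟩ : ∃ m, d j = m + 1 := ⟨d j - 1, by omega⟩
      rw [hm]
      simp only [Nat.add_sub_cancel, pow_succ]
      ring
    · rw [if_neg hd]
      by_cases hle : Finsupp.single j 1 ≤ d
      · rw [if_pos hle, coeff_B]
        have hdj : d j ≠ 0 := by
          have := Finsupp.single_le_iff.mp hle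
          omega
        have hsubj : (d - Finsupp.single j 1 : Fin n →₀ ℕ) j = d j - 1 := by
          rw [Finsupp.tsub_apply, Finsupp.single_eq_same]
        rw [if_neg, mul_one, add_zero]
        intro hbad
        apply hd
        rw [hsubj] at hbad
        calc d = (d - Finsupp.single j 1) + Finsupp.single j 1 :=
              (tsub_add_cancel_of_le hle).symm
          _ = Finsupp.single j (d j - 1 + 1) := by rw [hbad, ← Finsupp.single_add]
          _ = Finsupp.single j (d j) := by congr 1; omega
      · rw [if_neg hle, add_zero]

lemma inv_eq_B (j : Fin n) : (1 + MvPowerSeries.X j : MvPowerSeries (Fin n) ℚ)⁻¹ = B n j := by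
  rw [MvPowerSeries.inv_eq_iff_mul_eq_one]
  · exact B_mul j
  · simp

lemma sum_antidiag (d : Fin n →₀ ℕ) (j : Fin n) (f : (Fin n →₀ ℕ) → (Fin n →₀ ℕ) → ℚ)
    (hf : ∀ a b, a + b = d → b ≠ Finsupp.single j (b j) → f a b = 0) :
    ∑ p ∈ Finset.HasAntidiagonal.antidiagonal d, f p.1 p.2 =
      ∑ k ∈ Finset.range (d j + 1), f (d - Finsupp.single j k) (Finsupp.single j k) := by
  classical
  set e : ℕ ↪ (Fin n →₀ ℕ) × (Fin n →₀ ℕ) :=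
    ⟨fun k => (d - Finsupp.single j k, Finsupp.single j k), by
      intro k k' h
      have := congrArg (fun p => p.2 j) h
      simpa [Finsupp.single_eq_same] using this⟩ with he
  have hsubset : (Finset.range (d j + 1)).map e ⊆ Finset.HasAntidiagonal.antidiagonal d := by
    intro p hp
    rw [Finset.mem_map] at hp
    obtain ⟨k, hk, rfl⟩ := hp
    rw [Finset.mem_range] at hk
    rw [Finset.HasAntidiagonal.mem_antidiagonal]
    exact tsub_add_cancel_of_le (Finsupp.single_le_iff.mpr (by omega))
  have hmap : ∑ p ∈ (Finset.range (d j + 1)).map e, f p.1 p.2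
      = ∑ k ∈ Finset.range (d j + 1), f (d - Finsupp.single j k) (Finsupp.single j k) := by
    rw [Finset.sum_map]
    rfl
  rw [← hmap]
  apply (Finset.sum_subset hsubset ?_).symm
  intro p hp hnp
  rw [Finset.HasAntidiagonal.mem_antidiagonal] at hp
  apply hf p.1 p.2 hp
  intro hbad
  apply hnp
  rw [Finset.mem_map]
  refine ⟨p.2 j, ?_, ?_⟩
  · rw [Finset.mem_range]
    have := congrArg (fun g : Fin n →₀ ℕ => g j) hp
    simp only [Finsupp.add_apply] at this
    omega
  · have h1 : p.1 = d - Finsupp.single j (p.2 j) := by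
      rw [← hbad]
      exact eq_tsub_of_add_eq hp
    rw [he]
    change (d - Finsupp.single j (p.2 j), Finsupp.single j (p.2 j)) = p
    rw [← h1, ← hbad]

end SmAux

theorem smirnov_gf (n : ℕ) (hn : 0 < n)
    (S : MvPowerSeries (Fin n) ℚ)
    (hS : ∀ d : Fin n →₀ ℕ,
      MvPowerSeries.coeff d S =
        (Nat.card {l : List (Fin n) //
          l.Chain' (· ≠ ·) ∧ ∀ j : Fin n, l.count j = d j} : ℚ)) :
    S * (1 - ∑ j : Fin n, MvPowerSeries.X j * (1 + MvPowerSeries.X j)⁻¹) = 1 := by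
  classical
  have hS' : ∀ d : Fin n →₀ ℕ, MvPowerSeries.coeff d S = (SmAux.N n d : ℚ) := hS
  apply MvPowerSeries.ext
  intro d
  simp only [SmAux.inv_eq_B]
  rw [mul_sub, mul_one, map_sub, Finset.mul_sum, map_sum, MvPowerSeries.coeff_one, hS']
  have hterm : ∀ j : Fin n,
      MvPowerSeries.coeff d (S * (MvPowerSeries.X j * SmAux.B n j)) =
        ∑ k ∈ Finset.range (d j),
          (-1 : ℚ) ^ k * (SmAux.N n (d - Finsupp.single j (k + 1)) : ℚ) := by
    intro j
    have hXB : MvPowerSeries.X j * SmAux.B n j = 1 - SmAux.B n j := by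
      have h := SmAux.B_mul j
      rw [mul_add, mul_one] at h
      rw [mul_comm]
      linear_combination h
    rw [hXB, mul_sub, mul_one, map_sub, hS']
    have hSB : MvPowerSeries.coeff d (S * SmAux.B n j) =
        ∑ k ∈ Finset.range (d j + 1),
          (-1 : ℚ) ^ k * (SmAux.N n (d - Finsupp.single j k) : ℚ) := by
      rw [MvPowerSeries.coeff_mul]
      rw [SmAux.sum_antidiag d j
        (fun a b => MvPowerSeries.coeff a S * MvPowerSeries.coeff b (SmAux.B n j))
        (fun a b hab hb => by rw [SmAux.coeff_B, if_neg hb, mul_zero])]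
      apply Finset.sum_congr rfl
      intro k _
      rw [hS', SmAux.coeff_B, if_pos (by rw [Finsupp.single_eq_same]), Finsupp.single_eq_same]
      ring
    rw [hSB, Finset.sum_range_succ']
    have h0 : (-1 : ℚ) ^ 0 * (SmAux.N n (d - Finsupp.single j 0) : ℚ) = (SmAux.N n d : ℚ) := by
      rw [Finsupp.single_zero, tsub_zero, pow_zero, one_mul]
    rw [h0]
    have hptw : ∀ k ∈ Finset.range (d j),
        (-1 : ℚ) ^ (k + 1) * (SmAux.N n (d - Finsupp.single j (k + 1)) : ℚ)
        = -((-1 : ℚ) ^ k * (SmAux.N n (d - Finsupp.single j (k + 1)) : ℚ)) := by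
      intro k _
      ring
    rw [Finset.sum_congr rfl hptw, Finset.sum_neg_distrib]
    ring
  rw [Finset.sum_congr rfl fun j _ => hterm j]
  have := SmAux.key (n := n) d
  linarith [this]
end

section
/- Let r be a positive integer and let A ∈ ℚ[[X]] be any formal power series in one variable over ℚ. Then there exists a unique formal power series P ∈ ℚ[[X]] with constant coefficient 0 such that P = X * (A(P))^r, where A(P) denotes the substitution of P into A (well defined because P has zero constant coefficient). -/
/-- Substitution of a formal power series `P` (intended to have zero constant coefficient)
into a formal power series `A`: the coefficient of `X^n` in `A(P)` is the coefficient of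
`X^n` in the partial sum `∑_{k ≤ n} (coeff k A) • P^k`, which is correct since, when the
constant coefficient of `P` is zero, `P^k` contributes nothing in degree `n` for `k > n`. -/
noncomputable def substSeries (P A : PowerSeries ℚ) : PowerSeries ℚ :=
  PowerSeries.mk fun n =>
    PowerSeries.coeff n
      (∑ k ∈ Finset.range (n + 1), PowerSeries.C (PowerSeries.coeff k A) * P ^ k)

open PowerSeries

private lemma trunc_eq_iff {n : ℕ} {P Q : PowerSeries ℚ} :
    trunc n P = trunc n Q ↔ ∀ m < n, coeff m P = coeff m Q := by
  constructor
  · intro h m hm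
    have := congrArg (fun p => Polynomial.coeff p m) h
    simpa [coeff_trunc, hm] using this
  · intro h
    ext m
    simp only [coeff_trunc]
    split_ifs with hm
    · exact h m hm
    · rfl

private lemma trunc_pow_eq {n : ℕ} {P Q : PowerSeries ℚ} (h : trunc n P = trunc n Q) (k : ℕ) :
    trunc n (P ^ k) = trunc n (Q ^ k) := by
  rw [← trunc_trunc_pow P n k, ← trunc_trunc_pow Q n k, h]

/-- The contraction lemma: if `P` and `Q` agree below degree `n`, then
`X * (substSeries _ A)^r` agree below degree `n+1`. -/
private lemma contraction {n : ℕ} {P Q A : PowerSeries ℚ} (r : ℕ)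
    (h : trunc n P = trunc n Q) :
    trunc (n + 1) (PowerSeries.X * (substSeries P A) ^ r)
      = trunc (n + 1) (PowerSeries.X * (substSeries Q A) ^ r) := by
  have hsub : trunc n (substSeries P A) = trunc n (substSeries Q A) := by
    rw [trunc_eq_iff]
    intro m hm
    simp only [substSeries, coeff_mk, map_sum]
    refine Finset.sum_congr rfl fun k _ => ?_
    have := (trunc_eq_iff.mp (trunc_pow_eq h k)) m hm
    simp [coeff_C_mul, this]
  have hpow := trunc_pow_eq hsub r
  rw [trunc_eq_iff] at hpow ⊢
  intro m hm
  rcases m with _ | m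
  · simp
  · rw [coeff_succ_X_mul, coeff_succ_X_mul]
    exact hpow m (by omega)

/-- Iterates of the map `P ↦ X * (substSeries P A)^r` starting from 0. -/
private noncomputable def approx (A : PowerSeries ℚ) (r : ℕ) : ℕ → PowerSeries ℚ
  | 0 => 0
  | n + 1 => PowerSeries.X * (substSeries (approx A r n) A) ^ r

private lemma approx_agree (A : PowerSeries ℚ) (r : ℕ) :
    ∀ n, trunc n (approx A r n) = trunc n (approx A r (n + 1)) := by
  intro n
  induction n with
  | zero => ext m; simp [coeff_trunc]
  | succ n ih =>
    exact contraction r ih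

private lemma approx_agree_of_le (A : PowerSeries ℚ) (r : ℕ) {n m : ℕ} (h : n ≤ m) :
    ∀ k < n, coeff k (approx A r n) = coeff k (approx A r m) := by
  induction m with
  | zero => intro k hk; omega
  | succ m ih =>
    intro k hk
    rcases Nat.lt_or_ge n (m + 1) with h' | h'
    · rw [ih (by omega) k hk]
      exact trunc_eq_iff.mp (approx_agree A r m) k (by omega)
    · have : n = m + 1 := by omega
      subst this; rfl

theorem colored_hypertree_gf_exists_unique (r : ℕ) (hr : 0 < r) (A : PowerSeries ℚ) :
    ∃! P : PowerSeries ℚ,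
      PowerSeries.constantCoeff P = 0 ∧
      P = PowerSeries.X * (substSeries P A) ^ r := by
  set P : PowerSeries ℚ := PowerSeries.mk fun n => coeff n (approx A r (n + 1)) with hP
  have hPagree : ∀ n, trunc n P = trunc n (approx A r n) := by
    intro n
    rw [trunc_eq_iff]
    intro m hm
    rw [hP, coeff_mk]
    exact approx_agree_of_le A r (by omega : m + 1 ≤ n) m (by omega)
  have hfix : P = PowerSeries.X * (substSeries P A) ^ r := by
    ext n
    have h1 := contraction (A := A) r (hPagree n)
    have := trunc_eq_iff.mp h1 n (by omega)
    rw [this]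
    show coeff n P = coeff n (approx A r (n + 1))
    rw [hP, coeff_mk]
  have hconst : constantCoeff P = 0 := by
    rw [hfix]; simp
  refine ⟨P, ⟨hconst, hfix⟩, ?_⟩
  rintro Q ⟨-, hQ⟩
  ext n
  induction n using Nat.strong_induction_on with
  | _ n ih =>
    have htr : trunc n Q = trunc n P := trunc_eq_iff.mpr fun m hm => ih m hm
    have := trunc_eq_iff.mp (contraction (A := A) r htr) n (by omega)
    rw [hQ, hfix]
    exact this
end
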